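/- arXiv:1111.3376 — 7 statements merged into one kernel-verified Lean document; each statement's English description precedes it below -/
import Mathlib

section
/- Let f_1,…,f_M ∈ ℝ^N be the columns of a matrix F that satisfies the (2K,δ)-restricted isometry property, where K ≥ 2 is an integer and δ is a real number. Then for every pair of nonempty subsets 𝒦, 𝒦' ⊆ {1,…,M} with |𝒦| ≤ K and |𝒦'| ≤ K, and every index m with m ∈ 𝒦 and m ∉ 𝒦', the distance between the equal-weight averages satisfies ‖(1/|𝒦|) Σ_{k∈𝒦} f_k − (1/|𝒦'|) Σ_{k∈𝒦'} f_k‖ ≥ √((1−δ)/(K(K−1))). -/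
open scoped RealInnerProductSpace

/-- Interpret a plain vector in `Fin n → ℝ` as an element of Euclidean space
(so that `‖·‖` is the Euclidean norm). -/
noncomputable def euc {n : ℕ} (v : Fin n → ℝ) : EuclideanSpace ℝ (Fin n) :=
  (WithLp.equiv 2 (Fin n → ℝ)).symm v

/-- `x` has at most `K` nonzero entries. -/
def Sparse {M : ℕ} (K : ℕ) (x : Fin M → ℝ) : Prop :=
  (Finset.univ.filter fun i => x i ≠ 0).card ≤ K

/-- `F` satisfies the `(K, δ)`-restricted isometry property:
`(1−δ)‖x‖² ≤ ‖Fx‖² ≤ (1+δ)‖x‖²` for every `K`-sparse `x`. -/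
def RIP {N M : ℕ} (K : ℕ) (δ : ℝ) (F : Matrix (Fin N) (Fin M) ℝ) : Prop :=
  ∀ x : Fin M → ℝ, Sparse K x →
    (1 - δ) * ‖euc x‖ ^ 2 ≤ ‖euc (F.mulVec x)‖ ^ 2 ∧
      ‖euc (F.mulVec x)‖ ^ 2 ≤ (1 + δ) * ‖euc x‖ ^ 2

set_option maxHeartbeats 1000000 in
theorem stmt_0 {N M : ℕ} (K : ℕ) (hK : 2 ≤ K) (δ : ℝ)
    (F : Matrix (Fin N) (Fin M) ℝ) (hRIP : RIP (2 * K) δ F)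
    (𝒦 𝒦' : Finset (Fin M)) (h𝒦 : 𝒦.Nonempty) (h𝒦' : 𝒦'.Nonempty)
    (hc : 𝒦.card ≤ K) (hc' : 𝒦'.card ≤ K)
    (m : Fin M) (hm : m ∈ 𝒦) (hm' : m ∉ 𝒦') :
    Real.sqrt ((1 - δ) / ((K : ℝ) * ((K : ℝ) - 1))) ≤
      ‖(𝒦.card : ℝ)⁻¹ • ∑ k ∈ 𝒦, euc (fun n => F n k) -
        (𝒦'.card : ℝ)⁻¹ • ∑ k ∈ 𝒦', euc (fun n => F n k)‖ := by
  have ha : 0 < 𝒦.card := Finset.card_pos.mpr h𝒦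
  have hb : 0 < 𝒦'.card := Finset.card_pos.mpr h𝒦'
  set a := 𝒦.card with hadef
  set b := 𝒦'.card with hbdef
  set c := (𝒦 ∩ 𝒦').card with hcdef
  have hca : c + 1 ≤ a := by
    have : 𝒦 ∩ 𝒦' ⊆ 𝒦.erase m := by
      intro i hi
      rw [Finset.mem_inter] at hi
      rw [Finset.mem_erase]
      exact ⟨fun h => hm' (h ▸ hi.2), hi.1⟩
    have := Finset.card_le_card this
    rw [Finset.card_erase_of_mem hm] at this
    omega
  have hcb : c ≤ b := Finset.card_le_card (Finset.inter_subset_right)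
  set x : Fin M → ℝ := fun i =>
    (if i ∈ 𝒦 then (a : ℝ)⁻¹ else 0) - (if i ∈ 𝒦' then (b : ℝ)⁻¹ else 0) with hxdef
  have hsp : Sparse (2 * K) x := by
    unfold Sparse
    calc (Finset.univ.filter fun i => x i ≠ 0).card ≤ (𝒦 ∪ 𝒦').card := by
          apply Finset.card_le_card
          intro i hi
          simp only [Finset.mem_filter] at hi
          by_contra hni
          rw [Finset.mem_union, not_or] at hni
          apply hi.2
          simp [hxdef, hni.1, hni.2]
      _ ≤ a + b := Finset.card_union_le _ _
      _ ≤ 2 * K := by omega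
  obtain ⟨hrip1, -⟩ := hRIP x hsp
  have haR : (0:ℝ) < a := by exact_mod_cast ha
  have hbR : (0:ℝ) < b := by exact_mod_cast hb
  -- identify F.mulVec x with the difference of averages
  have hFx : euc (F.mulVec x) =
      (a : ℝ)⁻¹ • ∑ k ∈ 𝒦, euc (fun n => F n k) -
        (b : ℝ)⁻¹ • ∑ k ∈ 𝒦', euc (fun n => F n k) := by
    have heq : F.mulVec x = (a : ℝ)⁻¹ • (∑ k ∈ 𝒦, fun n => F n k) -
        (b : ℝ)⁻¹ • (∑ k ∈ 𝒦', fun n => F n k) := by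
      funext n
      simp only [Pi.sub_apply, Pi.smul_apply, Finset.sum_apply, smul_eq_mul,
        Matrix.mulVec, dotProduct, hxdef]
      rw [Finset.sum_congr rfl (fun j _ => mul_sub (F n j) _ _), Finset.sum_sub_distrib]
      congr 1
      · rw [Finset.mul_sum]
        simp [mul_ite, Finset.sum_ite_mem, mul_comm]
      · rw [Finset.mul_sum]
        simp [mul_ite, Finset.sum_ite_mem, mul_comm]
    calc euc (F.mulVec x)
        = (WithLp.linearEquiv 2 ℝ (Fin N → ℝ)).symm (F.mulVec x) := rfl
      _ = _ := by
          rw [heq, map_sub, map_smul, map_smul, map_sum, map_sum]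
          rfl
  -- compute ‖euc x‖²
  have hx2 : ‖euc x‖ ^ 2 = (a : ℝ)⁻¹ + (b : ℝ)⁻¹ - 2 * c * ((a : ℝ)⁻¹ * (b : ℝ)⁻¹) := by
    have hnorm : ‖euc x‖ ^ 2 = ∑ i, x i ^ 2 := by
      rw [EuclideanSpace.norm_eq, Real.sq_sqrt (by positivity)]
      simp [euc, Real.norm_eq_abs, sq_abs]
    rw [hnorm]
    have key : ∀ i, x i ^ 2 =
        (if i ∈ 𝒦 then ((a : ℝ)⁻¹) ^ 2 else 0) + (if i ∈ 𝒦' then ((b : ℝ)⁻¹) ^ 2 else 0)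
          - (if i ∈ 𝒦 ∩ 𝒦' then 2 * ((a : ℝ)⁻¹ * (b : ℝ)⁻¹) else 0) := by
      intro i
      simp only [hxdef, Finset.mem_inter]
      by_cases hi1 : i ∈ 𝒦 <;> by_cases hi2 : i ∈ 𝒦' <;>
        simp only [hi1, hi2, if_true, if_false, and_self, and_true, and_false,
          true_and, false_and] <;> ring
    rw [Finset.sum_congr rfl (fun i _ => key i), Finset.sum_sub_distrib,
      Finset.sum_add_distrib]
    simp only [Finset.sum_ite_mem, Finset.univ_inter, Finset.sum_const, nsmul_eq_mul]
    have e1 : (a : ℝ) * ((a : ℝ)⁻¹) ^ 2 = (a : ℝ)⁻¹ := by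
      rw [sq, ← mul_assoc, mul_inv_cancel₀ haR.ne', one_mul]
    have e2 : (b : ℝ) * ((b : ℝ)⁻¹) ^ 2 = (b : ℝ)⁻¹ := by
      rw [sq, ← mul_assoc, mul_inv_cancel₀ hbR.ne', one_mul]
    rw [e1, e2]
    ring
  -- key arithmetic inequality
  have hKR : (2:ℝ) ≤ K := by exact_mod_cast hK
  have hkey : 1 / ((K : ℝ) * ((K : ℝ) - 1)) ≤ ‖euc x‖ ^ 2 := by
    rw [hx2]
    have haK : (a : ℝ) ≤ K := by exact_mod_cast hc
    have hbK : (b : ℝ) ≤ K := by exact_mod_cast hc'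
    have hcaR : (c : ℝ) + 1 ≤ a := by exact_mod_cast hca
    have hcbR : (c : ℝ) ≤ b := by exact_mod_cast hcb
    have hcR : (0:ℝ) ≤ c := Nat.cast_nonneg c
    have hval : (a : ℝ)⁻¹ + (b : ℝ)⁻¹ - 2 * c * ((a : ℝ)⁻¹ * (b : ℝ)⁻¹) =
        ((a : ℝ) + b - 2 * c) / ((a : ℝ) * b) := by field_simp; ring
    have h1a : (1:ℝ) ≤ a := by exact_mod_cast ha
    have h1b : (1:ℝ) ≤ b := by exact_mod_cast hb
    have hKpos : (0:ℝ) ≤ (K:ℝ) * ((K:ℝ) - 1) := by nlinarith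
    rw [hval, div_le_div_iff₀ (by nlinarith) (by positivity)]
    rw [one_mul]
    rcases le_or_gt a b with hba | hba
    · have hbaR : (a:ℝ) ≤ b := by exact_mod_cast hba
      have h3 : (2:ℝ) ≤ (a:ℝ) + b - 2 * c := by linarith
      have hab : (a:ℝ) * b ≤ (K:ℝ) * K := mul_le_mul haK hbK (by linarith) (by linarith)
      have h4 : 2 * ((K:ℝ) * ((K:ℝ) - 1)) ≤ ((a:ℝ) + b - 2 * c) * ((K:ℝ) * ((K:ℝ) - 1)) :=
        mul_le_mul_of_nonneg_right h3 hKpos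
      have h5 : (0:ℝ) ≤ (K:ℝ) * ((K:ℝ) - 2) := mul_nonneg (by linarith) (by linarith)
      nlinarith [h4, h5, hab]
    · have hbaR : (b:ℝ) + 1 ≤ a := by exact_mod_cast hba
      have h3 : (1:ℝ) ≤ (a:ℝ) + b - 2 * c := by linarith
      have hab : (a:ℝ) * b ≤ (K:ℝ) * ((K:ℝ) - 1) :=
        mul_le_mul haK (by linarith) (by linarith) (by linarith)
      have h4 : 1 * ((K:ℝ) * ((K:ℝ) - 1)) ≤ ((a:ℝ) + b - 2 * c) * ((K:ℝ) * ((K:ℝ) - 1)) :=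
        mul_le_mul_of_nonneg_right h3 hKpos
      linarith
  have hfinal : (1 - δ) / ((K : ℝ) * ((K : ℝ) - 1)) ≤ ‖euc (F.mulVec x)‖ ^ 2 := by
    rcases le_or_gt (1 - δ) 0 with hδ | hδ
    · have : (1 - δ) / ((K : ℝ) * ((K : ℝ) - 1)) ≤ 0 :=
        div_nonpos_of_nonpos_of_nonneg hδ (by nlinarith)
      exact this.trans (by positivity)
    · calc (1 - δ) / ((K : ℝ) * ((K : ℝ) - 1))
          = (1 - δ) * (1 / ((K : ℝ) * ((K : ℝ) - 1))) := by ring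
        _ ≤ (1 - δ) * ‖euc x‖ ^ 2 := by
            exact mul_le_mul_of_nonneg_left hkey hδ.le
        _ ≤ ‖euc (F.mulVec x)‖ ^ 2 := hrip1
  calc Real.sqrt ((1 - δ) / ((K : ℝ) * ((K : ℝ) - 1)))
      ≤ Real.sqrt (‖euc (F.mulVec x)‖ ^ 2) := Real.sqrt_le_sqrt hfinal
    _ = ‖euc (F.mulVec x)‖ := Real.sqrt_sq (norm_nonneg _)
    _ = _ := by rw [hFx]
end

section
/- Let s ∈ ℝ^N, let 𝒦 be a nonempty finite index set, and let {f_k}_{k∈𝒦} be vectors in ℝ^N of equal norm (‖f_k‖ = ‖f_{k'}‖ for all k, k' ∈ 𝒦) that do not lie in a common hyperplane, in the sense that for every nonzero v ∈ ℝ^N the function k ↦ ⟨v, f_k⟩ is not constant on 𝒦. Define g : ℝ^N → ℝ by g(x) := Σ_{k∈𝒦} ( ‖x−(s+f_k)‖² − (1/|𝒦|) Σ_{k'∈𝒦} ‖x−(s+f_{k'})‖² )². Then s is the unique global minimizer of g; more precisely, g(s) = 0 and g(x) > 0 for every x ≠ s. -/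
open scoped RealInnerProductSpace

theorem stmt_4 {N : ℕ} {ι : Type*} [Fintype ι] [Nonempty ι]
    (s : EuclideanSpace ℝ (Fin N)) (f : ι → EuclideanSpace ℝ (Fin N))
    (heq : ∀ k k' : ι, ‖f k‖ = ‖f k'‖)
    (hhyp : ∀ v : EuclideanSpace ℝ (Fin N), v ≠ 0 → ∃ k k' : ι, ⟪v, f k⟫ ≠ ⟪v, f k'⟫)
    (g : EuclideanSpace ℝ (Fin N) → ℝ)
    (hg : ∀ x, g x = ∑ k : ι,
      (‖x - (s + f k)‖ ^ 2 - (Fintype.card ι : ℝ)⁻¹ * ∑ k' : ι, ‖x - (s + f k')‖ ^ 2) ^ 2) :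
    g s = 0 ∧ ∀ x, x ≠ s → 0 < g x := by
  have key : ∀ x, ∀ k : ι, ‖x - (s + f k)‖ ^ 2
      = ‖x - s‖ ^ 2 - 2 * ⟪x - s, f k⟫ + ‖f k‖ ^ 2 := by
    intro x k
    have h : x - (s + f k) = (x - s) - f k := by abel
    rw [h, norm_sub_sq_real]
  constructor
  · rw [hg]
    apply Finset.sum_eq_zero
    intro k _
    have hk : ∀ k' : ι, ‖s - (s + f k')‖ ^ 2 = ‖f k‖ ^ 2 := by
      intro k'
      rw [key]
      simp [heq k' k]
    have hsum : ∑ k' : ι, ‖s - (s + f k')‖ ^ 2 = (Fintype.card ι : ℝ) * ‖f k‖ ^ 2 := by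
      rw [Finset.sum_congr rfl fun k' _ => hk k']
      simp [Finset.card_univ, mul_comm]
    rw [hk k, hsum]
    have hcard : (Fintype.card ι : ℝ) ≠ 0 := by
      exact_mod_cast Fintype.card_ne_zero
    field_simp
    simp
  · intro x hx
    rw [hg]
    set μ := (Fintype.card ι : ℝ)⁻¹ * ∑ k' : ι, ‖x - (s + f k')‖ ^ 2 with hμ
    have hv : x - s ≠ 0 := sub_ne_zero.mpr hx
    obtain ⟨k, k', hkk'⟩ := hhyp (x - s) hv
    have hne : ‖x - (s + f k)‖ ^ 2 ≠ ‖x - (s + f k')‖ ^ 2 := by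
      rw [key, key, heq k k']
      intro h
      apply hkk'
      linarith
    apply Finset.sum_pos'
    · intro i _
      positivity
    · by_cases h : ‖x - (s + f k)‖ ^ 2 = μ
      · refine ⟨k', Finset.mem_univ _, ?_⟩
        have : ‖x - (s + f k')‖ ^ 2 - μ ≠ 0 := by
          rw [← h]; intro hc; exact hne (by linarith)
        positivity
      · refine ⟨k, Finset.mem_univ _, ?_⟩
        have : ‖x - (s + f k)‖ ^ 2 - μ ≠ 0 := sub_ne_zero.mpr h
        positivity
end

section
/- Let f_1,…,f_M ∈ ℝ^N satisfy ‖f_i‖ = γ for all i, where γ > 0, and |⟨f_i,f_j⟩| ≤ μγ² for all i ≠ j. Let 𝒦 ⊆ {1,…,M} be nonempty, let (α_k)_{k∈𝒦} be nonnegative reals with Σ_{k∈𝒦} α_k = 1, and let m ∉ 𝒦. Let σ > 0 and let ε be a random vector in ℝ^N whose N coordinates are i.i.d. Gaussian N(0,σ²). Then for every τ ∈ ℝ, the probability that the test statistic T_m(z) := ⟨Σ_{k∈𝒦} α_k f_k + ε, f_m⟩/γ² satisfies T_m(z) ≥ τ is at most Q((γ/σ)(τ − μ)). -/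
open MeasureTheory ProbabilityTheory
open scoped RealInnerProductSpace

/-- The law of a random vector in `ℝ^N` whose `N` coordinates are
i.i.d. Gaussian `N(0, σ²)`. -/
noncomputable def iidGaussian (N : ℕ) (σ : ℝ) : Measure (Fin N → ℝ) :=
  Measure.pi fun _ : Fin N => gaussianReal 0 ⟨σ ^ 2, sq_nonneg σ⟩

/-- The standard Gaussian tail function `Q(x)`, as the measure of `[x, ∞)`
under the standard Gaussian measure `N(0,1)` on `ℝ`. -/
noncomputable def gaussQ (x : ℝ) : ENNReal := gaussianReal 0 1 (Set.Ici x)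

open Real
open scoped NNReal


lemma sqrt_aux {A B C : ℝ} (hA : 0 ≤ A) (hB : 0 ≤ B) (hC : 0 ≤ C) :
    (√A)⁻¹ * (√B)⁻¹ * √C = √(C / (A * B)) := by
  rw [Real.sqrt_div hC, Real.sqrt_mul hA, div_eq_mul_inv, mul_inv]
  ring

lemma pdf_conv_real {a b : ℝ} (ha : 0 < a) (hb : 0 < b) (t : ℝ) :
    ∫ x : ℝ, (√(2 * π * a))⁻¹ * rexp (-x ^ 2 / (2 * a)) *
        ((√(2 * π * b))⁻¹ * rexp (-(t - x) ^ 2 / (2 * b)))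
      = (√(2 * π * (a + b)))⁻¹ * rexp (-t ^ 2 / (2 * (a + b))) := by
  have hV : (0:ℝ) < a + b := by linarith
  set k : ℝ := (a + b) / (2 * a * b) with hk
  have hkpos : 0 < k := by positivity
  set c : ℝ := a * t / (a + b) with hc
  set C : ℝ := (√(2 * π * a))⁻¹ * (√(2 * π * b))⁻¹ * rexp (- t ^ 2 / (2 * (a + b))) with hC
  have step : ∀ x : ℝ, (√(2 * π * a))⁻¹ * rexp (-x ^ 2 / (2 * a)) *
        ((√(2 * π * b))⁻¹ * rexp (-(t - x) ^ 2 / (2 * b)))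
      = C * rexp (-(k * (x - c) ^ 2)) := by
    intro x
    have hexp : -x ^ 2 / (2 * a) + -(t - x) ^ 2 / (2 * b)
        = -t ^ 2 / (2 * (a + b)) + -(k * (x - c) ^ 2) := by
      rw [hk, hc]; field_simp; ring
    have e1 : (√(2 * π * a))⁻¹ * rexp (-x ^ 2 / (2 * a)) *
          ((√(2 * π * b))⁻¹ * rexp (-(t - x) ^ 2 / (2 * b)))
        = (√(2 * π * a))⁻¹ * (√(2 * π * b))⁻¹ *
            rexp (-x ^ 2 / (2 * a) + -(t - x) ^ 2 / (2 * b)) := by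
      rw [Real.exp_add]; ring
    have e2 : C * rexp (-(k * (x - c) ^ 2))
        = (√(2 * π * a))⁻¹ * (√(2 * π * b))⁻¹ *
            rexp (-t ^ 2 / (2 * (a + b)) + -(k * (x - c) ^ 2)) := by
      rw [hC, Real.exp_add]; ring
    rw [e1, e2, hexp]
  rw [MeasureTheory.integral_congr_ae (Filter.Eventually.of_forall step),
    MeasureTheory.integral_const_mul]
  have h1 : ∫ x : ℝ, rexp (-(k * (x - c) ^ 2)) = ∫ x : ℝ, rexp (-(k * x ^ 2)) :=
    integral_sub_right_eq_self (fun x => rexp (-(k * x ^ 2))) c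
  have h2 := integral_gaussian k
  simp only [neg_mul] at h1 h2
  rw [h1, h2, hC]
  rw [mul_comm ((√(2 * π * a))⁻¹ * (√(2 * π * b))⁻¹ * _) (√(π/k)), ← mul_assoc, ← mul_assoc,
    mul_comm (√(π/k)) (√(2 * π * a))⁻¹, mul_assoc (√(2 * π * a))⁻¹, mul_comm (√(π/k)),
    ← mul_assoc, sqrt_aux (by positivity) (by positivity) (by positivity)]
  have : π / k / (2 * π * a * (2 * π * b)) = (2 * π * (a + b))⁻¹ := by
    rw [hk]; field_simp
  rw [this, Real.sqrt_inv]

lemma pdf_conv {v1 v2 : ℝ≥0} (h1 : v1 ≠ 0) (h2 : v2 ≠ 0) (t : ℝ) :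
    ∫ x : ℝ, gaussianPDFReal 0 v1 x * gaussianPDFReal 0 v2 (t - x)
      = gaussianPDFReal 0 (v1 + v2) t := by
  have ha : (0:ℝ) < v1 := lt_of_le_of_ne v1.coe_nonneg (by exact_mod_cast (Ne.symm h1))
  have hb : (0:ℝ) < v2 := lt_of_le_of_ne v2.coe_nonneg (by exact_mod_cast (Ne.symm h2))
  simpa only [gaussianPDFReal, sub_zero, NNReal.coe_add] using pdf_conv_real ha hb t

lemma pdf_conv_integrable (v1 v2 : ℝ≥0) (t : ℝ) :
    Integrable (fun x : ℝ => gaussianPDFReal 0 v1 x * gaussianPDFReal 0 v2 (t - x)) := by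
  have h := (integrable_gaussianPDFReal 0 v1).bdd_mul
    (f := fun x : ℝ => gaussianPDFReal 0 v2 (t - x)) (c := (√(2 * π * v2))⁻¹) ?_ ?_
  · simpa [mul_comm] using h
  · exact ((measurable_gaussianPDFReal 0 v2).comp (measurable_const.sub measurable_id)).aestronglyMeasurable
  · refine Filter.Eventually.of_forall fun x => ?_
    rw [Real.norm_eq_abs, abs_of_nonneg (gaussianPDFReal_nonneg _ _ _)]
    unfold gaussianPDFReal
    have h1 : rexp (-(t - x - 0) ^ 2 / (2 * v2)) ≤ 1 := by
      apply Real.exp_le_one_iff.mpr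
      apply div_nonpos_of_nonpos_of_nonneg (neg_nonpos.mpr (sq_nonneg _)) (by positivity)
    calc (√(2 * π * v2))⁻¹ * rexp (-(t - x - 0) ^ 2 / (2 * v2))
        ≤ (√(2 * π * v2))⁻¹ * 1 := by
          apply mul_le_mul_of_nonneg_left h1 (by positivity)
      _ = (√(2 * π * v2))⁻¹ := mul_one _

lemma gaussianPDF_prod_measurable (v : ℝ≥0) :
    Measurable (fun p : ℝ × ℝ => gaussianPDF p.1 v p.2) := by
  unfold gaussianPDF gaussianPDFReal
  apply Measurable.ennreal_ofReal
  fun_prop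

lemma gaussian_conv (v1 v2 : ℝ≥0) :
    ((gaussianReal 0 v1).prod (gaussianReal 0 v2)).map (fun p : ℝ × ℝ => p.1 + p.2)
      = gaussianReal 0 (v1 + v2) := by
  by_cases h1 : v1 = 0
  · subst h1
    rw [gaussianReal_zero_var, Measure.dirac_prod, Measure.map_map measurable_add (by fun_prop),
      zero_add]
    simp only [Function.comp_def, zero_add]
    exact Measure.map_id
  by_cases h2 : v2 = 0
  · subst h2
    rw [gaussianReal_zero_var, Measure.prod_dirac, Measure.map_map measurable_add (by fun_prop),
      add_zero]
    simp only [Function.comp_def, add_zero]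
    exact Measure.map_id
  have hV : v1 + v2 ≠ 0 := by positivity
  ext s hs
  rw [Measure.map_apply measurable_add hs, Measure.prod_apply (measurable_add hs)]
  have hfib : ∀ x : ℝ, gaussianReal 0 v2 (Prod.mk x ⁻¹' ((fun p : ℝ × ℝ => p.1 + p.2) ⁻¹' s))
      = ∫⁻ t in s, gaussianPDF x v2 t := by
    intro x
    have : Prod.mk x ⁻¹' ((fun p : ℝ × ℝ => p.1 + p.2) ⁻¹' s) = (x + ·) ⁻¹' s := rfl
    rw [this, ← Measure.map_apply (measurable_const_add x) hs, gaussianReal_map_const_add,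
      zero_add, gaussianReal_apply _ h2 s]
  simp_rw [hfib]
  rw [gaussianReal_of_var_ne_zero _ h1, gaussianReal_apply _ hV s,
    lintegral_withDensity_eq_lintegral_mul _ (measurable_gaussianPDF 0 v1)
      ((gaussianPDF_prod_measurable v2).lintegral_prod_right' (ν := volume.restrict s))]
  have hswap : ∫⁻ x, gaussianPDF 0 v1 x * ∫⁻ t in s, gaussianPDF x v2 t
      = ∫⁻ t in s, ∫⁻ x, gaussianPDF 0 v1 x * gaussianPDF x v2 t := by
    rw [lintegral_congr (fun x => (lintegral_const_mul' (gaussianPDF 0 v1 x) _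
      (by simp [gaussianPDF])).symm)]
    exact lintegral_lintegral_swap
      (((measurable_gaussianPDF 0 v1).comp measurable_fst).mul
        (gaussianPDF_prod_measurable v2)).aemeasurable
  simp only [Pi.mul_apply]
  rw [hswap]
  refine setLIntegral_congr_fun hs (fun t _ => ?_)
  have hmul : ∀ x : ℝ, gaussianPDF 0 v1 x * gaussianPDF x v2 t
      = ENNReal.ofReal (gaussianPDFReal 0 v1 x * gaussianPDFReal 0 v2 (t - x)) := by
    intro x
    rw [gaussianPDF, gaussianPDF, ← ENNReal.ofReal_mul (gaussianPDFReal_nonneg _ _ _)]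
    congr 1
    rw [gaussianPDFReal_sub, zero_add]
  simp_rw [hmul]
  rw [← ofReal_integral_eq_lintegral_ofReal (pdf_conv_integrable v1 v2 t)
      (Filter.Eventually.of_forall fun x =>
        mul_nonneg (gaussianPDFReal_nonneg _ _ _) (gaussianPDFReal_nonneg _ _ _)),
    pdf_conv h1 h2 t, gaussianPDF]

lemma measurable_lin {n : ℕ} (a : Fin n → ℝ) :
    Measurable (fun e : Fin n → ℝ => ∑ i, a i * e i) :=
  Finset.measurable_sum (f := fun i (e : Fin n → ℝ) => a i * e i) _ fun i _ => by fun_prop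

lemma map_lin_gaussian (v : ℝ≥0) :
    ∀ (n : ℕ) (a : Fin n → ℝ) (V : ℝ≥0), ((V:ℝ) = (∑ i, (a i)^2) * v) →
    (Measure.pi fun _ : Fin n => gaussianReal 0 v).map (fun e => ∑ i, a i * e i)
      = gaussianReal 0 V
  | 0, a, V, hV => by
      have hV0 : V = 0 := by
        ext
        simpa using hV
      subst hV0
      rw [show (fun e : Fin 0 → ℝ => ∑ i, a i * e i) = fun _ => (0:ℝ) by
        funext e; simp]
      rw [Measure.map_const]
      simp
  | (n+1), a, V, hV => by
      set a' : Fin n → ℝ := fun j => a j.succ with ha'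
      set V' : ℝ≥0 := ⟨(∑ j, a' j ^ 2) * v, by positivity⟩ with hV'
      have key := (measurePreserving_piFinSuccAbove
        (fun _ : Fin (n+1) => gaussianReal 0 v) 0).map_eq
      have hcomp : (fun x : Fin (n+1) → ℝ => ∑ i, a i * x i)
          = (fun p : ℝ × (Fin n → ℝ) => a 0 * p.1 + ∑ j, a' j * p.2 j)
            ∘ (MeasurableEquiv.piFinSuccAbove (fun _ : Fin (n+1) => ℝ) 0) := by
        funext x
        simp [MeasurableEquiv.piFinSuccAbove, Fin.sum_univ_succ, ha', Fin.tail]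
      have hmg : Measurable (fun p : ℝ × (Fin n → ℝ) => a 0 * p.1 + ∑ j, a' j * p.2 j) :=
        (measurable_fst.const_mul _).add ((measurable_lin a').comp measurable_snd)
      rw [hcomp, ← Measure.map_map hmg (MeasurableEquiv.measurable _), key]
      have hg : (fun p : ℝ × (Fin n → ℝ) => a 0 * p.1 + ∑ j, a' j * p.2 j)
          = (fun q : ℝ × ℝ => q.1 + q.2)
            ∘ Prod.map (fun x => a 0 * x) (fun y : Fin n → ℝ => ∑ j, a' j * y j) := rfl
      have hm1 : Measurable fun x : ℝ => a 0 * x := measurable_id.const_mul _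
      rw [hg, ← Measure.map_map measurable_add (hm1.prodMap (measurable_lin a')),
        ← Measure.map_prod_map _ _ hm1 (measurable_lin a'),
        gaussianReal_map_const_mul,
        map_lin_gaussian v n a' V' rfl,
        mul_zero, gaussian_conv]
      congr 1
      ext
      push_cast
      rw [hV, Fin.sum_univ_succ]
      simp only [hV', ha', NNReal.coe_mk]
      ring_nf
      rfl

lemma gaussianReal_Ici_eq {v : ℝ≥0} (hv : 0 < (v:ℝ)) (c : ℝ) :
    gaussianReal 0 v (Set.Ici c) = gaussQ (c / Real.sqrt v) := by
  have hs : 0 < Real.sqrt v := Real.sqrt_pos.mpr hv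
  have hmeas : Measurable fun x : ℝ => Real.sqrt (v:ℝ) * x := measurable_id.const_mul _
  have hmap : (gaussianReal 0 1).map (fun x : ℝ => Real.sqrt (v:ℝ) * x) = gaussianReal 0 v := by
    rw [gaussianReal_map_const_mul, mul_zero]
    congr 1
    ext
    simp [Real.sq_sqrt hv.le]
  rw [← hmap, Measure.map_apply hmeas measurableSet_Ici]
  have hpre : (fun x : ℝ => Real.sqrt (v:ℝ) * x) ⁻¹' Set.Ici c = Set.Ici (c / Real.sqrt v) := by
    ext x
    simp only [Set.mem_preimage, Set.mem_Ici]
    rw [div_le_iff₀ hs, mul_comm]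
  rw [hpre]
  rfl

theorem stmt_5 {N M : ℕ} (f : Fin M → EuclideanSpace ℝ (Fin N)) (γ μ : ℝ)
    (hγ : 0 < γ) (hnorm : ∀ i, ‖f i‖ = γ)
    (hcoh : ∀ i j, i ≠ j → |⟪f i, f j⟫| ≤ μ * γ ^ 2)
    (𝒦 : Finset (Fin M)) (h𝒦 : 𝒦.Nonempty)
    (α : Fin M → ℝ) (hα : ∀ k ∈ 𝒦, 0 ≤ α k) (hsum : ∑ k ∈ 𝒦, α k = 1)
    (m : Fin M) (hm : m ∉ 𝒦) (σ : ℝ) (hσ : 0 < σ) (τ : ℝ) :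
    iidGaussian N σ
      {e | τ ≤ ⟪(∑ k ∈ 𝒦, α k • f k) + euc e, f m⟫ / γ ^ 2} ≤
      gaussQ ((γ / σ) * (τ - μ)) := by
  classical
  have hγ2 : (0:ℝ) < γ ^ 2 := by positivity
  set w : Fin N → ℝ := fun i => f m i with hw
  set C : ℝ := ⟪∑ k ∈ 𝒦, α k • f k, f m⟫ with hCdef
  have hC : C ≤ μ * γ ^ 2 := by
    rw [hCdef, sum_inner]
    calc ∑ k ∈ 𝒦, ⟪α k • f k, f m⟫
        = ∑ k ∈ 𝒦, α k * ⟪f k, f m⟫ := by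
          exact Finset.sum_congr rfl fun k hk => real_inner_smul_left _ _ _
      _ ≤ ∑ k ∈ 𝒦, α k * (μ * γ ^ 2) := by
          refine Finset.sum_le_sum fun k hk => ?_
          have hkm : k ≠ m := fun h => hm (h ▸ hk)
          exact mul_le_mul_of_nonneg_left
            (le_trans (le_abs_self _) (hcoh k m hkm)) (hα k hk)
      _ = μ * γ ^ 2 := by rw [← Finset.sum_mul, hsum, one_mul]
  have hsum_w : ∑ i, w i ^ 2 = γ ^ 2 := by
    have h := hnorm m
    rw [EuclideanSpace.norm_eq] at h
    have h2 := congrArg (· ^ 2) h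
    simp only [Real.sq_sqrt (by positivity : (0:ℝ) ≤ ∑ i, ‖f m i‖ ^ 2)] at h2
    simpa [hw, sq_abs] using h2
  set V : ℝ≥0 := ⟨γ ^ 2 * σ ^ 2, by positivity⟩ with hV
  have hmap := map_lin_gaussian ⟨σ ^ 2, sq_nonneg σ⟩ N w V
    (by simp only [hV, NNReal.coe_mk, hsum_w]; rfl)
  have hset : {e : Fin N → ℝ | τ ≤ ⟪(∑ k ∈ 𝒦, α k • f k) + euc e, f m⟫ / γ ^ 2}
      = (fun e : Fin N → ℝ => ∑ i, w i * e i) ⁻¹' Set.Ici (τ * γ ^ 2 - C) := by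
    ext e
    simp only [Set.mem_setOf_eq, Set.mem_preimage, Set.mem_Ici]
    rw [inner_add_left, le_div_iff₀ hγ2]
    have hee : ⟪euc e, f m⟫ = ∑ i, w i * e i := by
      rw [PiLp.inner_apply]
      refine Finset.sum_congr rfl fun i _ => ?_
      simp only [RCLike.inner_apply, conj_trivial, hw]
      show f m i * e i = f m i * e i
      ring
    rw [hee, ← hCdef]
    constructor <;> intro h <;> linarith
  rw [iidGaussian, hset, ← Measure.map_apply (measurable_lin w) measurableSet_Ici, hmap,
    gaussianReal_Ici_eq (by show (0:ℝ) < γ ^ 2 * σ ^ 2; positivity) _]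
  have hsqrtV : Real.sqrt (V:ℝ) = γ * σ := by
    rw [hV]
    show Real.sqrt (γ ^ 2 * σ ^ 2) = γ * σ
    rw [show γ ^ 2 * σ ^ 2 = (γ * σ) ^ 2 by ring,
      Real.sqrt_sq (by positivity)]
  rw [hsqrtV]
  unfold gaussQ
  refine measure_mono (Set.Ici_subset_Ici.mpr ?_)
  rw [le_div_iff₀ (by positivity)]
  have : γ / σ * (τ - μ) * (γ * σ) = (τ - μ) * γ ^ 2 := by
    field_simp
  rw [this]
  nlinarith [hC]
end

section
/- Let f_1,…,f_M ∈ ℝ^N satisfy ‖f_i‖ = γ for all i, where γ > 0, and |⟨f_i,f_j⟩| ≤ μγ² for all i ≠ j, with μ ≥ 0. Let 𝒦 ⊆ {1,…,M} be nonempty, let (α_k)_{k∈𝒦} be nonnegative reals with Σ_{k∈𝒦} α_k = 1, and let m ∈ 𝒦. Let σ > 0 and let ε be a random vector in ℝ^N whose N coordinates are i.i.d. Gaussian N(0,σ²). Then for every τ ∈ ℝ, the probability that the test statistic T_m(z) := ⟨Σ_{k∈𝒦} α_k f_k + ε, f_m⟩/γ² satisfies T_m(z) < τ is at most Q((γ/σ)((α_m(1+μ)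 − μ) − τ)). -/
open MeasureTheory ProbabilityTheory
open scoped RealInnerProductSpace

namespace StmtAux

open Real Set
open scoped NNReal ENNReal

/-- Tonelli for a product of single-coordinate functions on `Fin n → ℝ`. -/
lemma lintegral_pi_prod : ∀ {n : ℕ} (f : Fin n → ℝ → ℝ≥0∞), (∀ i, Measurable (f i)) →
    ∫⁻ x : Fin n → ℝ, ∏ i, f i (x i) ∂(Measure.pi fun _ => (volume : Measure ℝ)) =
      ∏ i, ∫⁻ t, f i t := by
  intro n
  induction n with
  | zero =>
    intro f _
    simp [Measure.pi_empty_univ]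
  | succ n ih =>
    intro f hf
    rw [← ((measurePreserving_piFinSuccAbove (fun _ : Fin (n + 1) => (volume : Measure ℝ))
      0).symm).lintegral_comp_emb (MeasurableEquiv.measurableEmbedding _)]
    simp only [MeasurableEquiv.piFinSuccAbove_symm_apply, Fin.insertNthEquiv, Equiv.coe_fn_mk,
      Fin.insertNth_zero, Fin.prod_univ_succ, Fin.zero_succAbove, cast_eq, Fin.cons_zero,
      Fin.cons_succ]
    have hgm : Measurable fun x : Fin n → ℝ => ∏ i, f i.succ (x i) :=
      Finset.measurable_prod Finset.univ fun i _ => (hf i.succ).comp (measurable_pi_apply i)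
    calc ∫⁻ a : ℝ × (Fin n → ℝ), f 0 a.1 * ∏ i, f i.succ (a.2 i)
          ∂(volume : Measure ℝ).prod (Measure.pi fun _ => (volume : Measure ℝ))
        = (∫⁻ t, f 0 t) * ∫⁻ x : Fin n → ℝ, ∏ i, f i.succ (x i)
            ∂(Measure.pi fun _ => (volume : Measure ℝ)) :=
          lintegral_prod_mul (hf 0).aemeasurable hgm.aemeasurable
      _ = (∫⁻ t, f 0 t) * ∏ i : Fin n, ∫⁻ t, f i.succ t := by
          rw [ih (fun i => f i.succ) (fun i => hf i.succ)]

/-- The iid Gaussian measure has the product Gaussian density w.r.t. Lebesgue. -/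
lemma iid_eq_withDensity (N : ℕ) (v : ℝ≥0) (hv : v ≠ 0) :
    Measure.pi (fun _ : Fin N => gaussianReal 0 v) =
      (Measure.pi fun _ : Fin N => (volume : Measure ℝ)).withDensity
        (fun x => ∏ i, gaussianPDF 0 v (x i)) := by
  refine Measure.pi_eq fun s hs => ?_
  rw [withDensity_apply _ (MeasurableSet.univ_pi hs),
    ← lintegral_indicator (MeasurableSet.univ_pi hs)]
  have key : ∀ x : Fin N → ℝ,
      (Set.univ.pi s).indicator (fun x => ∏ i, gaussianPDF 0 v (x i)) x
        = ∏ i, (s i).indicator (gaussianPDF 0 v) (x i) := by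
    intro x
    by_cases hx : x ∈ Set.univ.pi s
    · rw [Set.indicator_of_mem hx]
      exact Finset.prod_congr rfl fun i _ =>
        (Set.indicator_of_mem (hx i (Set.mem_univ i)) _).symm
    · rw [Set.indicator_of_notMem hx]
      obtain ⟨i, hi⟩ : ∃ i, x i ∉ s i := by simpa [Set.mem_univ_pi] using hx
      exact (Finset.prod_eq_zero (Finset.mem_univ i) (Set.indicator_of_notMem hi _)).symm
  simp_rw [key]
  rw [lintegral_pi_prod _ fun i => (measurable_gaussianPDF 0 v).indicator (hs i)]
  refine Finset.prod_congr rfl fun i _ => ?_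
  rw [lintegral_indicator (hs i), gaussianReal_apply 0 hv (s i)]

/-- The product Gaussian density is rotation invariant. -/
lemma density_rot (N : ℕ) (v : ℝ≥0) (L : EuclideanSpace ℝ (Fin N) ≃ₗᵢ[ℝ] EuclideanSpace ℝ (Fin N))
    (e : Fin N → ℝ) :
    (∏ i, gaussianPDF 0 v (((MeasurableEquiv.toLp 2 (Fin N → ℝ)).symm) (L (euc e)) i))
      = ∏ i, gaussianPDF 0 v (e i) := by
  have hform : ∀ y : Fin N → ℝ, (∏ i, gaussianPDF 0 v (y i)) =
      ENNReal.ofReal (((√(2 * π * v))⁻¹) ^ N * rexp (-(∑ i, (y i) ^ 2) / (2 * v))) := by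
    intro y
    simp only [gaussianPDF]
    rw [← ENNReal.ofReal_prod_of_nonneg (fun i _ => gaussianPDFReal_nonneg 0 v (y i))]
    congr 1
    simp only [gaussianPDFReal, sub_zero]
    rw [Finset.prod_mul_distrib, Finset.prod_const, ← Real.exp_sum, Finset.card_univ]
    congr 1
    · simp
    · rw [← Finset.sum_div]
      congr 1
      simp
  rw [hform, hform]
  have hnorm : ∀ z : EuclideanSpace ℝ (Fin N), ∑ i, (z i) ^ 2 = ‖z‖ ^ 2 := by
    intro z
    rw [EuclideanSpace.norm_eq]
    rw [Real.sq_sqrt (by positivity)]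
    simp [sq_abs]
  have h1 : ∑ i, (((MeasurableEquiv.toLp 2 (Fin N → ℝ)).symm) (L (euc e)) i) ^ 2
      = ∑ i, (e i) ^ 2 := by
    have : ∀ i, ((MeasurableEquiv.toLp 2 (Fin N → ℝ)).symm) (L (euc e)) i = (L (euc e)) i :=
      fun i => rfl
    simp_rw [this]
    rw [hnorm (L (euc e)), L.norm_map, ← hnorm (euc e)]
    rfl
  rw [h1]

/-- Rotation invariance of the iid Gaussian measure. -/
lemma map_rot (N : ℕ) (σ : ℝ) (hσ : 0 < σ)
    (L : EuclideanSpace ℝ (Fin N) ≃ₗᵢ[ℝ] EuclideanSpace ℝ (Fin N)) :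
    Measure.map (fun e : Fin N → ℝ => ((MeasurableEquiv.toLp 2 (Fin N → ℝ)).symm) (L (euc e)))
      (iidGaussian N σ) = iidGaussian N σ := by
  set v : ℝ≥0 := ⟨σ ^ 2, sq_nonneg σ⟩ with hvdef
  have hv : v ≠ 0 := by
    intro h
    have h2 : (σ ^ 2 : ℝ) = 0 := by
      have := congrArg (fun x : ℝ≥0 => (x : ℝ)) h
      exact this
    nlinarith
  set g : (Fin N → ℝ) → ℝ≥0∞ := fun x => ∏ i, gaussianPDF 0 v (x i) with hg
  have hgmeas : Measurable g :=
    Finset.measurable_prod Finset.univ fun i _ =>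
      (measurable_gaussianPDF 0 v).comp (measurable_pi_apply i)
  -- the map as a measurable equiv
  let φ := (MeasurableEquiv.toLp 2 (Fin N → ℝ)).symm
  let S : (Fin N → ℝ) ≃ᵐ (Fin N → ℝ) :=
    (φ.symm.trans (L.toHomeomorph.toMeasurableEquiv)).trans φ
  have hS : (fun e : Fin N → ℝ => φ (L (euc e))) = S := rfl
  have hSpres : MeasurePreserving S (volume : Measure (Fin N → ℝ)) volume := by
    have h1 : MeasurePreserving φ.symm (volume : Measure (Fin N → ℝ)) volume :=
      (EuclideanSpace.volume_preserving_symm_measurableEquiv_toLp (Fin N)).symm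
    have h2 : MeasurePreserving L (volume : Measure (EuclideanSpace ℝ (Fin N))) volume :=
      L.measurePreserving
    have h3 : MeasurePreserving φ (volume : Measure (EuclideanSpace ℝ (Fin N))) volume :=
      EuclideanSpace.volume_preserving_symm_measurableEquiv_toLp (Fin N)
    exact (h3.comp h2).comp h1
  have hgS : ∀ e, g (S e) = g e := by
    intro e
    exact density_rot N v L e
  have hiid : iidGaussian N σ =
      (volume : Measure (Fin N → ℝ)).withDensity g := by
    rw [iidGaussian, iid_eq_withDensity N v hv, volume_pi]
  rw [hS, hiid]
  ext A hA
  rw [Measure.map_apply S.measurable hA, withDensity_apply _ (S.measurable hA),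
    withDensity_apply _ hA]
  calc ∫⁻ x in S ⁻¹' A, g x ∂volume = ∫⁻ x in S ⁻¹' A, g (S x) ∂volume := by
        refine setLIntegral_congr_fun (S.measurable hA) ?_
        intro x _
        exact (hgS x).symm
    _ = ∫⁻ y in A, g y ∂volume :=
        hSpres.setLIntegral_comp_preimage_emb S.measurableEmbedding _ _

/-- Marginal of the iid Gaussian: coordinate `i₀` is `N(0, σ²)`. -/
lemma map_eval (N : ℕ) (σ : ℝ) (i₀ : Fin N) :
    Measure.map (fun e : Fin N → ℝ => e i₀) (iidGaussian N σ)
      = gaussianReal 0 ⟨σ ^ 2, sq_nonneg σ⟩ := by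
  ext s hs
  rw [Measure.map_apply (measurable_pi_apply i₀) hs]
  have : (fun e : Fin N → ℝ => e i₀) ⁻¹' s
      = Set.pi Set.univ (Function.update (fun _ : Fin N => (Set.univ : Set ℝ)) i₀ s) := by
    classical
    exact Set.eval_preimage
  have hprob := instIsProbabilityMeasureGaussianReal 0 ⟨σ ^ 2, sq_nonneg σ⟩
  rw [iidGaussian, this, Measure.pi_pi]
  classical
  rw [Finset.prod_eq_single i₀ ?_ ?_]
  · rw [Function.update_self]
  · intro j _ hj
    rw [Function.update_of_ne hj]
    simp
  · intro h
    exact absurd (Finset.mem_univ i₀) h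

/-- The law of `⟪euc e, u⟫` for a unit vector `u` is `N(0, σ²)`. -/
lemma map_inner (N : ℕ) (σ : ℝ) (hσ : 0 < σ) (u : EuclideanSpace ℝ (Fin N)) (hu : ‖u‖ = 1) :
    Measure.map (fun e : Fin N → ℝ => ⟪euc e, u⟫) (iidGaussian N σ)
      = gaussianReal 0 ⟨σ ^ 2, sq_nonneg σ⟩ := by
  have hN : 0 < N := by
    rcases Nat.eq_zero_or_pos N with h | h
    · exfalso
      subst h
      have : u = 0 := Subsingleton.elim u 0
      rw [this, norm_zero] at hu
      norm_num at hu
    · exact h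
  classical
  let i₀ : Fin N := ⟨0, hN⟩
  have hcard : Module.finrank ℝ (EuclideanSpace ℝ (Fin N)) = Fintype.card (Fin N) := by
    simp [finrank_euclideanSpace]
  have horth : Orthonormal ℝ (({i₀} : Set (Fin N)).restrict (fun _ : Fin N => u)) := by
    constructor
    · intro i
      exact hu
    · intro i j hij
      exfalso
      apply hij
      ext
      have hi := i.2
      have hj := j.2
      simp only [Set.mem_singleton_iff] at hi hj
      rw [hi, hj]
  obtain ⟨b, hb⟩ := horth.exists_orthonormalBasis_extension_of_card_eq hcard
  have hb0 : b i₀ = u := hb i₀ rfl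
  have key : (fun e : Fin N → ℝ => ⟪euc e, u⟫)
      = (fun y : Fin N → ℝ => y i₀) ∘
        (fun e : Fin N → ℝ => ((MeasurableEquiv.toLp 2 (Fin N → ℝ)).symm) (b.repr (euc e))) := by
    funext e
    have h1 : ((MeasurableEquiv.toLp 2 (Fin N → ℝ)).symm) (b.repr (euc e)) i₀
        = b.repr (euc e) i₀ := rfl
    simp only [Function.comp_apply, h1]
    rw [b.repr_apply_apply, hb0, real_inner_comm]
  have hmeas : Measurable
      (fun e : Fin N → ℝ => ((MeasurableEquiv.toLp 2 (Fin N → ℝ)).symm) (b.repr (euc e))) := by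
    have : (fun e : Fin N → ℝ => ((MeasurableEquiv.toLp 2 (Fin N → ℝ)).symm) (b.repr (euc e)))
        = (((MeasurableEquiv.toLp 2 (Fin N → ℝ)).symm).symm.trans
            ((b.repr).toHomeomorph.toMeasurableEquiv |>.trans
              ((MeasurableEquiv.toLp 2 (Fin N → ℝ)).symm))) := rfl
    rw [this]
    exact MeasurableEquiv.measurable _
  rw [key, ← Measure.map_map (measurable_pi_apply i₀) hmeas,
    map_rot N σ hσ (b.repr), map_eval N σ i₀]

end StmtAux

theorem stmt_6 {N M : ℕ} (f : Fin M → EuclideanSpace ℝ (Fin N)) (γ μ : ℝ)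
    (hγ : 0 < γ) (hμ : 0 ≤ μ) (hnorm : ∀ i, ‖f i‖ = γ)
    (hcoh : ∀ i j, i ≠ j → |⟪f i, f j⟫| ≤ μ * γ ^ 2)
    (𝒦 : Finset (Fin M)) (h𝒦 : 𝒦.Nonempty)
    (α : Fin M → ℝ) (hα : ∀ k ∈ 𝒦, 0 ≤ α k) (hsum : ∑ k ∈ 𝒦, α k = 1)
    (m : Fin M) (hm : m ∈ 𝒦) (σ : ℝ) (hσ : 0 < σ) (τ : ℝ) :
    iidGaussian N σ
      {e | ⟪(∑ k ∈ 𝒦, α k • f k) + euc e, f m⟫ / γ ^ 2 < τ} ≤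
      gaussQ ((γ / σ) * ((α m * (1 + μ) - μ) - τ)) := by
  classical
  set A : ℝ := α m * (1 + μ) - μ with hA
  set u : EuclideanSpace ℝ (Fin N) := γ⁻¹ • f m with hu
  have hunorm : ‖u‖ = 1 := by
    rw [hu, norm_smul, hnorm m, norm_inv, Real.norm_eq_abs, abs_of_pos hγ,
      inv_mul_cancel₀ hγ.ne']
  have hfm : f m = γ • u := by
    rw [hu, smul_smul, mul_inv_cancel₀ hγ.ne', one_smul]
  -- deterministic bound on the signal term
  have hsig : γ ^ 2 * A ≤ ⟪∑ k ∈ 𝒦, α k • f k, f m⟫ := by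
    rw [sum_inner]
    simp_rw [real_inner_smul_left]
    rw [← Finset.add_sum_erase _ _ hm]
    have hself : ⟪f m, f m⟫ = γ ^ 2 := by
      rw [real_inner_self_eq_norm_sq, hnorm m]
    have herase : ∑ k ∈ 𝒦.erase m, α k = 1 - α m := by
      have := Finset.add_sum_erase 𝒦 α hm
      linarith [this.trans hsum]
    have hbound : -((1 - α m) * (μ * γ ^ 2)) ≤ ∑ k ∈ 𝒦.erase m, α k * ⟪f k, f m⟫ := by
      have : ∑ k ∈ 𝒦.erase m, -(α k * (μ * γ ^ 2)) ≤ ∑ k ∈ 𝒦.erase m, α k * ⟪f k, f m⟫ := by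
        refine Finset.sum_le_sum fun k hk => ?_
        have hkm : k ≠ m := Finset.ne_of_mem_erase hk
        have hk𝒦 : k ∈ 𝒦 := Finset.mem_of_mem_erase hk
        have h1 : -(μ * γ ^ 2) ≤ ⟪f k, f m⟫ := neg_le_of_abs_le (hcoh k m hkm)
        have h2 : 0 ≤ α k := hα k hk𝒦
        nlinarith
      calc -((1 - α m) * (μ * γ ^ 2)) = ∑ k ∈ 𝒦.erase m, -(α k * (μ * γ ^ 2)) := by
            rw [Finset.sum_neg_distrib, ← Finset.sum_mul, herase]
        _ ≤ _ := this
    rw [hself]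
    have hαm : 0 ≤ α m := hα m hm
    nlinarith [hbound]
  -- reduce the event to a half-line event for ⟪euc e, u⟫
  have hsub : {e : Fin N → ℝ | ⟪(∑ k ∈ 𝒦, α k • f k) + euc e, f m⟫ / γ ^ 2 < τ}
      ⊆ {e : Fin N → ℝ | ⟪euc e, u⟫ < γ * (τ - A)} := by
    intro e he
    simp only [Set.mem_setOf_eq] at he ⊢
    have hγ2 : (0:ℝ) < γ ^ 2 := by positivity
    rw [div_lt_iff₀ hγ2] at he
    rw [inner_add_left] at he
    have hx : ⟪euc e, f m⟫ = γ * ⟪euc e, u⟫ := by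
      rw [hfm, real_inner_smul_right]
    rw [hx] at he
    have : γ * ⟪euc e, u⟫ < γ * (γ * (τ - A)) := by nlinarith [hsig]
    exact lt_of_mul_lt_mul_left this hγ.le
  refine le_trans (measure_mono hsub) ?_
  -- compute the half-line probability
  have hFmeas : Measurable (fun e : Fin N → ℝ => ⟪euc e, u⟫) := by
    have : (fun e : Fin N → ℝ => ⟪euc e, u⟫) = fun e => ∑ i, e i * u i := by
      funext e
      rw [PiLp.inner_apply]
      simp [euc, mul_comm]
    rw [this]
    exact Finset.measurable_sum Finset.univ fun i _ =>
      (measurable_pi_apply i).mul_const _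
  have hset : {e : Fin N → ℝ | ⟪euc e, u⟫ < γ * (τ - A)}
      = (fun e : Fin N → ℝ => ⟪euc e, u⟫) ⁻¹' Set.Iio (γ * (τ - A)) := rfl
  have hlaw := StmtAux.map_inner N σ hσ u hunorm
  have h1 : iidGaussian N σ {e : Fin N → ℝ | ⟪euc e, u⟫ < γ * (τ - A)}
      = gaussianReal 0 ⟨σ ^ 2, sq_nonneg σ⟩ (Set.Iio (γ * (τ - A))) := by
    rw [hset, ← Measure.map_apply hFmeas measurableSet_Iio, hlaw]
  rw [h1]
  -- scaling: N(0,σ²) = map (σ * ·) N(0,1)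
  have hscale : gaussianReal 0 ⟨σ ^ 2, sq_nonneg σ⟩
      = (gaussianReal 0 1).map (σ * ·) := by
    rw [gaussianReal_map_const_mul σ]
    congr 1
    · ring
    · ext
      simp
      rfl
  rw [hscale, Measure.map_apply (measurable_const_mul σ) measurableSet_Iio]
  have hpre : (σ * ·) ⁻¹' Set.Iio (γ * (τ - A)) = Set.Iio (γ * (τ - A) / σ) := by
    ext x
    simp only [Set.mem_preimage, Set.mem_Iio]
    rw [lt_div_iff₀ hσ, mul_comm x σ]
  rw [hpre]
  -- symmetry: N(0,1)(Iio s) = N(0,1)(Ioi (-s)) ≤ N(0,1)(Ici (-s))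
  have hsymm : (gaussianReal 0 1) (Set.Iio (γ * (τ - A) / σ))
      = (gaussianReal 0 1) (Set.Ioi (-(γ * (τ - A) / σ))) := by
    have hneg : gaussianReal 0 1 = (gaussianReal 0 1).map ((-1 : ℝ) * ·) := by
      rw [gaussianReal_map_const_mul (-1 : ℝ)]
      congr 1
      · ring
      · ext
        simp
    conv_lhs => rw [hneg]
    rw [Measure.map_apply (measurable_const_mul (-1 : ℝ)) measurableSet_Iio]
    congr 1
    ext x
    simp only [Set.mem_preimage, Set.mem_Iio, Set.mem_Ioi]
    constructor
    · intro h; linarith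
    · intro h; linarith
  rw [hsymm]
  have hxval : -(γ * (τ - A) / σ) = (γ / σ) * (A - τ) := by
    field_simp
    ring
  rw [hxval, gaussQ]
  exact measure_mono Set.Ioi_subset_Ici_self
end

section
/- Let f_1,…,f_M ∈ ℝ^N satisfy ‖f_i‖ = γ for all i, where γ > 0, and |⟨f_i,f_j⟩| ≤ μγ² for all i ≠ j, with μ ≥ 0. Let 𝒦 ⊆ {1,…,M} be a coalition with |𝒦| = K ≥ 1, let σ > 0, and let ε be a random vector in ℝ^N whose N coordinates are i.i.d. Gaussian N(0,σ²). Then for every choice of nonnegative weights (α_k)_{k∈𝒦} with Σ_{k∈𝒦} α_k = 1 and every τ ∈ ℝ, there exists m ∈ 𝒦 such that the probability that the test statistic T_m(z) := ⟨Σ_{k∈𝒦} α_k f_k + ε, f_m⟩/γ² satisfies T_m(z) < τ is at most Q((γ/σ)(((1+μ)/K − μ) − τ)). -/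
open MeasureTheory ProbabilityTheory
open scoped RealInnerProductSpace ENNReal NNReal

lemma aux_map_withDensity {α β : Type*} [MeasurableSpace α] [MeasurableSpace β]
    (e : α ≃ᵐ β) (μ : Measure α) (f : α → ℝ≥0∞) (hf : Measurable f) :
    Measure.map e (μ.withDensity f) = (Measure.map e μ).withDensity (f ∘ e.symm) := by
  ext s hs
  rw [Measure.map_apply e.measurable hs, withDensity_apply _ (e.measurable hs),
    withDensity_apply _ hs,
    setLIntegral_map hs (hf.comp e.symm.measurable) e.measurable]
  congr 1
  ext x
  simp

lemma aux_withDensity_prod {α β : Type*} [MeasurableSpace α] [MeasurableSpace β]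
    (μ : Measure α) (ν : Measure β) [SigmaFinite μ] [SigmaFinite ν]
    (f : α → ℝ≥0∞) (g : β → ℝ≥0∞) (hf : Measurable f) (hg : Measurable g)
    [SigmaFinite (μ.withDensity f)] [SigmaFinite (ν.withDensity g)] :
    (μ.withDensity f).prod (ν.withDensity g)
      = (μ.prod ν).withDensity (fun p => f p.1 * g p.2) := by
  apply Measure.prod_eq
  intro s t hs ht
  rw [withDensity_apply _ (hs.prod ht), ← Measure.prod_restrict,
    lintegral_prod_mul hf.aemeasurable hg.aemeasurable,
    withDensity_apply _ hs, withDensity_apply _ ht]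

lemma aux_pi_withDensity (n : ℕ) (μ : Measure ℝ) [SigmaFinite μ]
    (f : ℝ → ℝ≥0∞) (hf : Measurable f) [IsProbabilityMeasure (μ.withDensity f)] :
    Measure.pi (fun _ : Fin n => μ.withDensity f)
      = (Measure.pi fun _ : Fin n => μ).withDensity (fun e => ∏ i, f (e i)) := by
  induction n with
  | zero =>
      apply Measure.pi_eq
      intro s _
      simp [withDensity_apply _ (MeasurableSet.univ_pi (fun i => (Fin.elim0 i : MeasurableSet (s i))))]
  | succ n ih =>
      set e := MeasurableEquiv.piFinSuccAbove (fun _ : Fin (n+1) => ℝ) 0 with he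
      have h1 := ((measurePreserving_piFinSuccAbove (fun _ : Fin (n+1) => μ.withDensity f) 0).symm e).map_eq
      have h2 := ((measurePreserving_piFinSuccAbove (fun _ : Fin (n+1) => μ) 0).symm e).map_eq
      have hsf : SigmaFinite ((Measure.pi fun _ : Fin n => μ).withDensity fun e => ∏ i, f (e i)) := by
        rw [← ih]; infer_instance
      rw [← h1, ih, aux_withDensity_prod _ _ _ _ hf (by fun_prop),
        aux_map_withDensity e.symm _ _ (by fun_prop), h2]
      congr 1
      funext x
      simp only [Function.comp, MeasurableEquiv.symm_symm]
      have hex : e x = (x 0, fun j : Fin n => x ((0 : Fin (n+1)).succAbove j)) := rfl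
      rw [hex]
      rw [Fin.prod_univ_succ]
      congr 1

lemma aux_map_eval {n : ℕ} (μ : Fin n → Measure ℝ) [∀ i, IsProbabilityMeasure (μ i)]
    (i : Fin n) : Measure.map (Function.eval i) (Measure.pi μ) = μ i := by
  ext s hs
  rw [Measure.map_apply (measurable_pi_apply i) hs, Set.eval_preimage, Measure.pi_pi,
    Finset.prod_eq_single i (fun j _ hj => by simp [Function.update_of_ne hj])
      (by simp)]
  simp

lemma aux_isometry_volume {n : ℕ}
    (T : EuclideanSpace ℝ (Fin n) ≃ₗᵢ[ℝ] EuclideanSpace ℝ (Fin n)) :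
    MeasurePreserving T volume volume := by
  have h := ((EuclideanSpace.basisFun (Fin n) ℝ).map T.symm).measurePreserving_repr
  have he : ⇑(((EuclideanSpace.basisFun (Fin n) ℝ).map T.symm).repr) = ⇑T := by
    funext x
    simp [OrthonormalBasis.map, EuclideanSpace.basisFun_repr]
    ext i
    simp [EuclideanSpace.basisFun_repr]
  rwa [he] at h

lemma aux_sum_sq {N : ℕ} (x : EuclideanSpace ℝ (Fin N)) : ∑ i, (x i)^2 = ‖x‖^2 := by
  rw [EuclideanSpace.norm_eq, Real.sq_sqrt (by positivity)]
  simp [sq_abs]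

lemma aux_prod_pdf {N : ℕ} (v : ℝ≥0) (w : Fin N → ℝ) :
    (∏ i, gaussianPDF 0 v (w i))
      = ENNReal.ofReal ((Real.sqrt (2*Real.pi*v))⁻¹ ^ N
          * Real.exp (-(∑ i, (w i)^2) / (2*v))) := by
  simp_rw [gaussianPDF, gaussianPDFReal]
  rw [← ENNReal.ofReal_prod_of_nonneg (fun i _ => by positivity)]
  congr 1
  rw [Finset.prod_mul_distrib, Finset.prod_const, ← Real.exp_sum, Finset.card_univ,
    Fintype.card_fin]
  congr 1
  rw [← Finset.sum_div, ← Finset.sum_neg_distrib]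
  simp

lemma aux_map_inner {N : ℕ} (hN : 0 < N) (σ : ℝ) (hσ : 0 < σ)
    (u : EuclideanSpace ℝ (Fin N)) (hu : ‖u‖ = 1) :
    Measure.map (fun e => ⟪euc e, u⟫) (iidGaussian N σ)
      = gaussianReal 0 ⟨σ^2, sq_nonneg σ⟩ := by
  set v : ℝ≥0 := ⟨σ^2, sq_nonneg σ⟩ with hv
  have hv0 : v ≠ 0 := by
    intro h
    have : σ^2 = 0 := congrArg NNReal.toReal h
    nlinarith
  have hprob : IsProbabilityMeasure (volume.withDensity (gaussianPDF 0 v)) := by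
    rw [← gaussianReal_of_var_ne_zero 0 hv0]; infer_instance
  set D : (Fin N → ℝ) → ℝ≥0∞ := fun e => ∏ i, gaussianPDF 0 v (e i) with hD
  have hDmeas : Measurable D :=
    Finset.measurable_prod _ (fun i _ => (measurable_gaussianPDF 0 v).comp (measurable_pi_apply i))
  have hiid : iidGaussian N σ
      = (Measure.pi fun _ : Fin N => (volume : Measure ℝ)).withDensity D := by
    show Measure.pi (fun _ : Fin N => gaussianReal 0 v) = _
    simp_rw [gaussianReal_of_var_ne_zero 0 hv0]
    exact aux_pi_withDensity N volume _ (measurable_gaussianPDF 0 v)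
  set i0 : Fin N := ⟨0, hN⟩
  have hnorm1 : ‖u‖ = ‖(EuclideanSpace.single i0 (1:ℝ))‖ := by
    rw [hu, EuclideanSpace.norm_single]; norm_num
  set T := Submodule.reflection (ℝ ∙ (u - EuclideanSpace.single i0 (1:ℝ)))ᗮ with hT
  have hTu : T u = EuclideanSpace.single i0 1 := Submodule.reflection_sub hnorm1
  set mE := (MeasurableEquiv.toLp 2 (Fin N → ℝ)).symm with hmE
  set G : (Fin N → ℝ) ≃ᵐ (Fin N → ℝ) :=
    mE.symm.trans ((T.toHomeomorph.toMeasurableEquiv).trans mE) with hG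
  have hGvol : MeasurePreserving G volume volume := by
    have h1 := EuclideanSpace.volume_preserving_symm_measurableEquiv_toLp (Fin N)
    exact h1.comp ((aux_isometry_volume T).comp h1.symm)
  have hmapG : Measure.map G (iidGaussian N σ) = iidGaussian N σ := by
    rw [hiid, aux_map_withDensity G _ D hDmeas]
    have hGv : Measure.map G (Measure.pi fun _ : Fin N => (volume : Measure ℝ))
        = Measure.pi fun _ : Fin N => (volume : Measure ℝ) := by
      have := hGvol.map_eq
      rwa [volume_pi] at this
    rw [hGv]
    congr 1
    funext w
    show D (G.symm w) = D w
    rw [hD]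
    simp only
    rw [aux_prod_pdf, aux_prod_pdf]
    have hsum : ∑ i, (G.symm w i)^2 = ∑ i, (w i)^2 := by
      have h1 : ∀ i, G.symm w i = (T.symm (mE.symm w)) i := fun i => rfl
      simp_rw [h1]
      rw [aux_sum_sq, T.symm.norm_map]
      have h2 : ∀ i, w i = (mE.symm w) i := fun i => rfl
      have h3 : ∑ i, (w i)^2 = ∑ i, ((mE.symm w : EuclideanSpace ℝ (Fin N)) i)^2 := rfl
      rw [h3, aux_sum_sq]
    rw [hsum]
  have hcomp : (fun e : Fin N → ℝ => ⟪euc e, u⟫) = (Function.eval i0) ∘ ⇑G := by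
    funext e
    show ⟪euc e, u⟫ = G e i0
    have h1 : G e i0 = (T (euc e)) i0 := rfl
    have h2 : (T (euc e)) i0 = ⟪T (euc e), EuclideanSpace.single i0 (1:ℝ)⟫ := by
      rw [EuclideanSpace.inner_single_right]; simp
    rw [h1, h2, ← hTu, LinearIsometryEquiv.inner_map_map]
  rw [hcomp, ← Measure.map_map (measurable_pi_apply i0) G.measurable, hmapG, iidGaussian]
  exact aux_map_eval (fun _ : Fin N => gaussianReal 0 v) i0

lemma gr_Iic_eq_Ici (v : ℝ≥0) (t : ℝ) :
    gaussianReal 0 v (Set.Iic t) = gaussianReal 0 v (Set.Ici (-t)) := by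
  have hmap := gaussianReal_map_const_mul (μ := 0) (v := v) (-1)
  have hone : NNReal.mk ((-1 : ℝ) ^ 2) (sq_nonneg _) = 1 := by ext; norm_num
  rw [hone, one_mul, neg_one_mul, neg_zero] at hmap
  conv_lhs => rw [← hmap]
  rw [Measure.map_apply (by fun_prop) measurableSet_Iic]
  congr 1
  ext x
  simp only [Set.mem_preimage, Set.mem_Iic, Set.mem_Ici]
  constructor <;> intro h <;> linarith

lemma gr_scale (σ : ℝ) (hσ : 0 < σ) (s : ℝ) :
    gaussianReal 0 ⟨σ^2, sq_nonneg σ⟩ (Set.Ici s) = gaussianReal 0 1 (Set.Ici (s / σ)) := by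
  have hmap := gaussianReal_map_const_mul (μ := 0) (v := ⟨σ^2, sq_nonneg σ⟩) σ⁻¹
  have hone : NNReal.mk ((σ⁻¹:ℝ)^2) (sq_nonneg _) * ⟨σ^2, sq_nonneg σ⟩ = 1 := by
    ext
    push_cast
    field_simp
    show (1 / σ ^ 2) * σ ^ 2 = 1
    exact one_div_mul_cancel (by positivity)
  rw [hone, mul_zero] at hmap
  rw [← hmap, Measure.map_apply (by fun_prop) measurableSet_Ici]
  congr 1
  ext x
  simp only [Set.mem_preimage, Set.mem_Ici]
  rw [inv_mul_eq_div]
  constructor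
  · intro h; gcongr
  · intro h
    have := mul_le_mul_of_nonneg_right h hσ.le
    rwa [div_mul_cancel₀ _ hσ.ne', div_mul_cancel₀ _ hσ.ne'] at this

theorem stmt_7 {N M : ℕ} (f : Fin M → EuclideanSpace ℝ (Fin N)) (γ μ : ℝ)
    (hγ : 0 < γ) (hμ : 0 ≤ μ) (hnorm : ∀ i, ‖f i‖ = γ)
    (hcoh : ∀ i j, i ≠ j → |⟪f i, f j⟫| ≤ μ * γ ^ 2)
    (𝒦 : Finset (Fin M)) (K : ℕ) (hK : 1 ≤ K) (hcard : 𝒦.card = K)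
    (σ : ℝ) (hσ : 0 < σ)
    (α : Fin M → ℝ) (hα : ∀ k ∈ 𝒦, 0 ≤ α k) (hsum : ∑ k ∈ 𝒦, α k = 1)
    (τ : ℝ) :
    ∃ m ∈ 𝒦,
      iidGaussian N σ
        {e | ⟪(∑ k ∈ 𝒦, α k • f k) + euc e, f m⟫ / γ ^ 2 < τ} ≤
        gaussQ ((γ / σ) * (((1 + μ) / (K : ℝ) - μ) - τ)) := by
  have hne : 𝒦.Nonempty := Finset.card_pos.mp (by omega)
  obtain ⟨m, hm, hmax⟩ := Finset.exists_max_image 𝒦 α hne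
  refine ⟨m, hm, ?_⟩
  have hKpos : (0:ℝ) < K := by positivity
  -- α m ≥ 1/K
  have hKα : 1 ≤ (K:ℝ) * α m := by
    calc (1:ℝ) = ∑ k ∈ 𝒦, α k := hsum.symm
    _ ≤ ∑ _k ∈ 𝒦, α m := Finset.sum_le_sum fun k hk => hmax k hk
    _ = (K:ℝ) * α m := by rw [Finset.sum_const, hcard, nsmul_eq_mul]
  -- N positive
  have hN : 0 < N := by
    rcases Nat.eq_zero_or_pos N with h0 | h
    · exfalso
      have hfm := hnorm m
      rw [EuclideanSpace.norm_eq] at hfm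
      subst h0
      simp at hfm
      linarith
    · exact h
  -- lower bound on inner product
  set S := ∑ k ∈ 𝒦, α k • f k with hS
  set c := ⟪S, f m⟫ with hc
  set c0 : ℝ := (1 + μ) / (K:ℝ) - μ with hc0
  have hcb : γ^2 * c0 ≤ c := by
    have hin : c = ∑ k ∈ 𝒦, α k * ⟪f k, f m⟫ := by
      rw [hc, hS, sum_inner]
      exact Finset.sum_congr rfl fun k _ => real_inner_smul_left _ _ _
    have hsplit : c = α m * ⟪f m, f m⟫ + ∑ k ∈ 𝒦.erase m, α k * ⟪f k, f m⟫ := by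
      rw [hin, ← Finset.add_sum_erase _ _ hm]
    have hself : ⟪f m, f m⟫ = γ^2 := by
      rw [real_inner_self_eq_norm_sq, hnorm m]
    have herase : ∀ k ∈ 𝒦.erase m, -(α k * (μ * γ^2)) ≤ α k * ⟪f k, f m⟫ := by
      intro k hk
      have hkm : k ≠ m := Finset.ne_of_mem_erase hk
      have hk𝒦 : k ∈ 𝒦 := Finset.mem_of_mem_erase hk
      have h1 : -(μ * γ^2) ≤ ⟪f k, f m⟫ := neg_le_of_abs_le (hcoh k m hkm)
      have h2 : 0 ≤ α k := hα k hk𝒦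
      nlinarith
    have hsum_erase : ∑ k ∈ 𝒦.erase m, α k = 1 - α m := by
      have := Finset.add_sum_erase 𝒦 α hm
      linarith [this.symm ▸ hsum]
    have hlow : -((1 - α m) * (μ * γ^2)) ≤ ∑ k ∈ 𝒦.erase m, α k * ⟪f k, f m⟫ := by
      have heq : ∑ k ∈ 𝒦.erase m, -(α k * (μ * γ^2)) = -((1 - α m) * (μ * γ^2)) := by
        rw [Finset.sum_neg_distrib, ← Finset.sum_mul, hsum_erase]
      calc -((1 - α m) * (μ * γ^2)) = ∑ k ∈ 𝒦.erase m, -(α k * (μ * γ^2)) := heq.symm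
      _ ≤ _ := Finset.sum_le_sum herase
    have hαm1 : α m ≤ 1 := by
      have h0 : ∀ k ∈ 𝒦.erase m, (0:ℝ) ≤ α k := fun k hk => hα k (Finset.mem_of_mem_erase hk)
      have := Finset.sum_nonneg h0
      linarith [hsum_erase]
    have hαmK : 1 / (K:ℝ) ≤ α m := by
      rw [div_le_iff₀ hKpos]
      linarith [mul_comm (α m) (K:ℝ)]
    have hc0αm : c0 ≤ α m * (1 + μ) - μ := by
      rw [hc0]
      have : (1 + μ) / (K:ℝ) ≤ α m * (1 + μ) := by
        rw [div_le_iff₀ hKpos]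
        nlinarith
      linarith
    nlinarith [hsplit, hself, hlow]
  -- the unit vector
  set u : EuclideanSpace ℝ (Fin N) := γ⁻¹ • f m with hu
  have hu1 : ‖u‖ = 1 := by
    rw [hu, norm_smul, hnorm m, norm_inv, Real.norm_eq_abs, abs_of_pos hγ,
      inv_mul_cancel₀ hγ.ne']
  have hfm_u : f m = γ • u := by
    rw [hu, smul_smul, mul_inv_cancel₀ hγ.ne', one_smul]
  -- event rewrite
  set t : ℝ := (τ * γ^2 - c) / γ with ht
  have hevent : {e : Fin N → ℝ | ⟪S + euc e, f m⟫ / γ ^ 2 < τ}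
      = (fun e => ⟪euc e, u⟫) ⁻¹' Set.Iio t := by
    ext e
    simp only [Set.mem_setOf_eq, Set.mem_preimage, Set.mem_Iio]
    rw [inner_add_left, ← hc]
    have h2 : ⟪euc e, f m⟫ = γ * ⟪euc e, u⟫ := by
      rw [hfm_u, real_inner_smul_right]
    rw [h2, ht, div_lt_iff₀ (by positivity), lt_div_iff₀ hγ]
    constructor <;> intro h <;> nlinarith [h]
  have hmeasfun : Measurable fun e : Fin N → ℝ => ⟪euc e, u⟫ := by
    have hcont : Continuous fun e : Fin N → ℝ => ⟪euc e, u⟫ := by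
      have heuc : Continuous (euc : (Fin N → ℝ) → EuclideanSpace ℝ (Fin N)) := by
        unfold euc
        exact PiLp.continuous_toLp 2 (fun _ : Fin N => ℝ)
      exact (heuc.inner continuous_const)
    exact hcont.measurable
  rw [hevent, ← Measure.map_apply hmeasfun measurableSet_Iio,
    aux_map_inner hN σ hσ u hu1]
  -- tail bound chain
  set v : ℝ≥0 := ⟨σ^2, sq_nonneg σ⟩ with hv
  calc gaussianReal 0 v (Set.Iio t)
      ≤ gaussianReal 0 v (Set.Iic t) := measure_mono Set.Iio_subset_Iic_self
    _ = gaussianReal 0 v (Set.Ici (-t)) := gr_Iic_eq_Ici v t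
    _ ≤ gaussianReal 0 v (Set.Ici (γ * (c0 - τ))) := by
        apply measure_mono
        apply Set.Ici_subset_Ici.mpr
        rw [ht, ← neg_div, neg_sub, le_div_iff₀ hγ]
        nlinarith
    _ = gaussianReal 0 1 (Set.Ici ((γ * (c0 - τ)) / σ)) := gr_scale σ hσ _
    _ = gaussQ ((γ / σ) * (c0 - τ)) := by
        rw [gaussQ]
        congr 1
        rw [div_mul_eq_mul_div, mul_comm]
    _ = gaussQ ((γ / σ) * (((1 + μ) / (K : ℝ) - μ) - τ)) := rfl
end

section
/- Let f_1,…,f_M ∈ ℝ^N satisfy ‖f_i‖ = γ for all i, where γ > 0, and |⟨f_i,f_j⟩| ≤ μγ² for all i ≠ j, with μ ≥ 0. Let 𝒦 ⊆ {1,…,M} be a coalition with |𝒦| = K ≥ 1, let σ > 0, and let ε be a random vector in ℝ^N whose N coordinates are i.i.d. Gaussian N(0,σ²). Consider the uniform attack z := (1/K) Σ_{k∈𝒦} f_k + ε, the test statistic T_m(z) := ⟨z, f_m⟩/γ², and the threshold τ* := (1+μ)/(2K). Then, with b := (γ/(2σK))(1 − (2K−1)μ): for every m ∉ 𝒦 the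 probability that T_m(z) ≥ τ* is at most Q(b), and for every m ∈ 𝒦 the probability that T_m(z) < τ* is at most Q(b). -/
open MeasureTheory ProbabilityTheory
open scoped RealInnerProductSpace
open Real
open scoped NNReal ENNReal

lemma gaussianPDFReal_conv (a b : ℝ≥0) (ha : a ≠ 0) (hb : b ≠ 0) (x : ℝ) :
    ∫ y, gaussianPDFReal 0 a y * gaussianPDFReal 0 b (x - y)
      = gaussianPDFReal 0 (a + b) x := by
  have ha' : (0:ℝ) < a := lt_of_le_of_ne (by positivity) (by exact_mod_cast ha.symm)
  have hb' : (0:ℝ) < b := lt_of_le_of_ne (by positivity) (by exact_mod_cast hb.symm)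
  have hab : (0:ℝ) < (a:ℝ) + b := by linarith
  set k : ℝ := ((a:ℝ) + b) / (2 * a * b) with hk
  have hk' : 0 < k := by positivity
  set c : ℝ := (a:ℝ) * x / ((a:ℝ) + b) with hc
  set C : ℝ := (√(2 * π * a))⁻¹ * (√(2 * π * b))⁻¹ * rexp (- x ^ 2 / (2 * ((a:ℝ) + b)))
    with hC
  have hpt : ∀ y, gaussianPDFReal 0 a y * gaussianPDFReal 0 b (x - y)
      = C * rexp (- (k * (y - c) ^ 2)) := by
    intro y
    simp only [gaussianPDFReal, sub_zero, hC]
    have hE : - y ^ 2 / (2 * (a:ℝ)) + - (x - y) ^ 2 / (2 * (b:ℝ))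
        = - x ^ 2 / (2 * ((a:ℝ) + b)) + - (k * (y - c) ^ 2) := by
      rw [hk, hc]; field_simp; ring
    rw [mul_mul_mul_comm, ← Real.exp_add, hE, Real.exp_add]
    ring
  rw [funext hpt, MeasureTheory.integral_const_mul,
    integral_sub_right_eq_self (fun y => rexp (- (k * y ^ 2))) c]
  simp_rw [neg_mul_eq_neg_mul]
  rw [integral_gaussian]
  simp only [gaussianPDFReal, sub_zero, hC]
  rw [mul_comm, ← mul_assoc, ← mul_assoc]
  congr 1
  push_cast
  rw [← Real.sqrt_inv, ← Real.sqrt_inv, ← Real.sqrt_inv, ← Real.sqrt_mul (by positivity),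
    ← Real.sqrt_mul (by positivity)]
  congr 1
  have hπ := Real.pi_pos
  rw [hk]
  field_simp

lemma gaussianPDFReal_le (v : ℝ≥0) (t : ℝ) :
    gaussianPDFReal 0 v t ≤ (√(2 * π * v))⁻¹ := by
  rw [gaussianPDFReal]
  refine mul_le_of_le_one_right (by positivity) (Real.exp_le_one_iff.2 ?_)
  exact div_nonpos_of_nonpos_of_nonneg (neg_nonpos.2 (sq_nonneg _)) (by positivity)

lemma lintegral_gaussianPDF_conv (v1 v2 : ℝ≥0) (h1 : v1 ≠ 0) (h2 : v2 ≠ 0) (z : ℝ) :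
    ∫⁻ x, gaussianPDF 0 v1 x * gaussianPDF 0 v2 (z - x) = gaussianPDF 0 (v1 + v2) z := by
  have hint : Integrable (fun x => gaussianPDFReal 0 v1 x * gaussianPDFReal 0 v2 (z - x)) := by
    refine Integrable.mono ((integrable_gaussianPDFReal 0 v1).const_mul (√(2 * π * v2))⁻¹)
      ?_ (ae_of_all _ fun x => ?_)
    · exact ((measurable_gaussianPDFReal 0 v1).mul
        ((measurable_gaussianPDFReal 0 v2).comp (measurable_const.sub measurable_id))
        ).aestronglyMeasurable
    · rw [Real.norm_eq_abs, Real.norm_eq_abs,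
        abs_of_nonneg (mul_nonneg (gaussianPDFReal_nonneg _ _ _) (gaussianPDFReal_nonneg _ _ _)),
        abs_of_nonneg (mul_nonneg (by positivity) (gaussianPDFReal_nonneg _ _ _))]
      calc gaussianPDFReal 0 v1 x * gaussianPDFReal 0 v2 (z - x)
          ≤ gaussianPDFReal 0 v1 x * (√(2 * π * v2))⁻¹ :=
            mul_le_mul_of_nonneg_left (gaussianPDFReal_le _ _) (gaussianPDFReal_nonneg _ _ _)
        _ = (√(2 * π * v2))⁻¹ * gaussianPDFReal 0 v1 x := mul_comm _ _
  simp only [gaussianPDF]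
  calc ∫⁻ x, ENNReal.ofReal (gaussianPDFReal 0 v1 x)
          * ENNReal.ofReal (gaussianPDFReal 0 v2 (z - x))
      = ∫⁻ x, ENNReal.ofReal (gaussianPDFReal 0 v1 x * gaussianPDFReal 0 v2 (z - x)) :=
        lintegral_congr fun x => (ENNReal.ofReal_mul (gaussianPDFReal_nonneg _ _ _)).symm
    _ = ENNReal.ofReal (∫ x, gaussianPDFReal 0 v1 x * gaussianPDFReal 0 v2 (z - x)) :=
        (ofReal_integral_eq_lintegral_ofReal hint (ae_of_all _ fun x =>
          mul_nonneg (gaussianPDFReal_nonneg _ _ _) (gaussianPDFReal_nonneg _ _ _))).symm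
    _ = _ := by rw [gaussianPDFReal_conv v1 v2 h1 h2 z]

lemma gaussianReal_conv (v1 v2 : ℝ≥0) :
    Measure.map (fun p : ℝ × ℝ => p.1 + p.2)
      ((gaussianReal 0 v1).prod (gaussianReal 0 v2)) = gaussianReal 0 (v1 + v2) := by
  rcases eq_or_ne v1 0 with h1 | h1
  · rw [h1, gaussianReal_zero_var, zero_add]
    rw [Measure.dirac_prod, Measure.map_map measurable_add (measurable_prodMk_left)]
    simp only [Function.comp_def, zero_add]
    exact Measure.map_id
  rcases eq_or_ne v2 0 with h2 | h2
  · rw [h2, gaussianReal_zero_var, add_zero]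
    rw [Measure.prod_dirac, Measure.map_map measurable_add (measurable_prodMk_right)]
    simp only [Function.comp_def, add_zero]
    exact Measure.map_id
  have hsum : v1 + v2 ≠ 0 := by simp [h1]
  set f := gaussianPDF 0 v1
  set g := gaussianPDF 0 v2
  have hf : Measurable f := measurable_gaussianPDF 0 v1
  have hg : Measurable g := measurable_gaussianPDF 0 v2
  rw [gaussianReal_of_var_ne_zero 0 h1, gaussianReal_of_var_ne_zero 0 h2,
    gaussianReal_of_var_ne_zero 0 hsum]
  ext s hs
  rw [Measure.map_apply measurable_add hs, withDensity_apply _ hs]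
  have hsadd : MeasurableSet ((fun p : ℝ × ℝ => p.1 + p.2) ⁻¹' s) := measurable_add hs
  rw [Measure.prod_apply hsadd]
  set ind : ℝ → ℝ≥0∞ := s.indicator 1 with hind
  have hindm : Measurable ind := measurable_one.indicator hs
  have slice : ∀ x : ℝ, (volume.withDensity g) (Prod.mk x ⁻¹' ((fun p : ℝ × ℝ => p.1 + p.2) ⁻¹' s))
      = ∫⁻ y, ind (x + y) * g y := by
    intro x
    have hmeas : MeasurableSet {y : ℝ | x + y ∈ s} := (measurable_const_add x) hs
    rw [show Prod.mk x ⁻¹' ((fun p : ℝ × ℝ => p.1 + p.2) ⁻¹' s) = {y : ℝ | x + y ∈ s} from rfl,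
      withDensity_apply _ hmeas, ← lintegral_indicator hmeas]
    refine lintegral_congr fun y => ?_
    by_cases hy : x + y ∈ s <;>
      simp [hind, Set.indicator_apply, hy, Set.mem_setOf_eq]
  calc ∫⁻ x, (volume.withDensity g) (Prod.mk x ⁻¹' ((fun p : ℝ × ℝ => p.1 + p.2) ⁻¹' s))
        ∂(volume.withDensity f)
      = ∫⁻ x, f x * ∫⁻ y, ind (x + y) * g y := by
        rw [lintegral_withDensity_eq_lintegral_mul _ hf
          (measurable_measure_prodMk_left hsadd)]
        exact lintegral_congr fun x => by simp only [Pi.mul_apply]; rw [slice x]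
    _ = ∫⁻ x, f x * ∫⁻ z, ind z * g (z - x) := by
        refine lintegral_congr fun x => ?_
        congr 1
        calc ∫⁻ y, ind (x + y) * g y
            = ∫⁻ y, (fun z => ind z * g (z - x)) (x + y) := by
              refine lintegral_congr fun y => ?_
              simp [add_sub_cancel_left]
          _ = ∫⁻ z, ind z * g (z - x) :=
              lintegral_add_left_eq_self (fun z => ind z * g (z - x)) x
    _ = ∫⁻ x, ∫⁻ z, f x * (ind z * g (z - x)) := by
        refine lintegral_congr fun x => ?_
        exact (lintegral_const_mul' (f x) _ ENNReal.ofReal_ne_top).symm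
    _ = ∫⁻ z, ∫⁻ x, f x * (ind z * g (z - x)) := by
        refine lintegral_lintegral_swap ?_
        exact ((hf.comp measurable_fst).mul ((hindm.comp measurable_snd).mul
          (hg.comp (measurable_snd.sub measurable_fst)))).aemeasurable
    _ = ∫⁻ z, ind z * ∫⁻ x, f x * g (z - x) := by
        refine lintegral_congr fun z => ?_
        have hindtop : ind z ≠ ∞ := by
          by_cases hz : z ∈ s <;> simp [hind, Set.indicator_apply, hz]
        rw [← lintegral_const_mul' (ind z) _ hindtop]
        exact lintegral_congr fun x => by ring
    _ = ∫⁻ z in s, gaussianPDF 0 (v1 + v2) z := by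
        rw [← lintegral_indicator hs]
        refine lintegral_congr fun z => ?_
        rw [lintegral_gaussianPDF_conv v1 v2 h1 h2 z]
        by_cases hz : z ∈ s <;> simp [hind, Set.indicator_apply, hz]

lemma map_pi_gaussian (v : ℝ≥0) :
    ∀ (n : ℕ) (c : Fin n → ℝ),
    Measure.map (fun e : Fin n → ℝ => ∑ i, c i * e i)
        (Measure.pi fun _ : Fin n => gaussianReal 0 v)
      = gaussianReal 0 (⟨∑ i, (c i) ^ 2, Finset.sum_nonneg fun i _ => sq_nonneg _⟩ * v) := by
  intro n
  induction n with
  | zero =>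
    intro c
    have h0 : (⟨∑ i : Fin 0, (c i) ^ 2, Finset.sum_nonneg fun i _ => sq_nonneg _⟩ : ℝ≥0) = 0 := by
      ext; simp
    have h1 : (fun e : Fin 0 → ℝ => ∑ i, c i * e i) = fun _ => (0:ℝ) := by
      funext e; simp
    rw [h1, Measure.map_const]
    erw [h0, zero_mul, gaussianReal_zero_var]
    simp
  | succ n ih =>
    intro c
    set c' : Fin n → ℝ := fun j => c j.succ with hc'
    have hm1 : Measurable (fun x : ℝ => c 0 * x) := by fun_prop
    have hm2 : Measurable (fun e : Fin n → ℝ => ∑ j, c' j * e j) := by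
      exact Finset.measurable_sum _ fun j _ => (measurable_pi_apply j).const_mul _
    set F : ℝ × (Fin n → ℝ) → ℝ := fun p => c 0 * p.1 + ∑ j, c' j * p.2 j with hF
    have hFmeas : Measurable F := (hm1.comp measurable_fst).add (hm2.comp measurable_snd)
    have hcomp : (fun e : Fin (n+1) → ℝ => ∑ i, c i * e i)
        = F ∘ (MeasurableEquiv.piFinSuccAbove (fun _ : Fin (n+1) => ℝ) 0) := by
      funext e
      simp [hF, Fin.sum_univ_succ, MeasurableEquiv.piFinSuccAbove, Fin.removeNth,
        Fin.zero_succAbove, hc', Fin.tail]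
    have key := (measurePreserving_piFinSuccAbove (fun _ : Fin (n+1) => gaussianReal 0 v) 0).map_eq
    rw [hcomp, ← Measure.map_map hFmeas (MeasurableEquiv.measurable _), key]
    have hsplit : F = (fun p : ℝ × ℝ => p.1 + p.2)
        ∘ Prod.map (fun x : ℝ => c 0 * x) (fun e : Fin n → ℝ => ∑ j, c' j * e j) := by
      funext p; simp [hF]
    rw [hsplit, ← Measure.map_map measurable_add (hm1.prodMap hm2),
      ← Measure.map_prod_map _ _ hm1 hm2,
      gaussianReal_map_const_mul, ih c', show c 0 * 0 = 0 from mul_zero _, gaussianReal_conv]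
    congr 1
    ext
    change c 0 ^ 2 * (v:ℝ) + (∑ i, c' i ^ 2) * (v:ℝ) = (∑ i, c i ^ 2) * (v:ℝ)
    rw [Fin.sum_univ_succ]
    ring

lemma gaussianReal_Ici (s : ℝ) (hs : 0 < s) (a : ℝ) :
    gaussianReal 0 ⟨s ^ 2, sq_nonneg s⟩ (Set.Ici a) = gaussQ (a / s) := by
  have h : (⟨s ^ 2, sq_nonneg s⟩ : ℝ≥0) = ⟨s ^ 2, sq_nonneg s⟩ * 1 := by ext; simp
  have hmap := gaussianReal_map_const_mul (μ := 0) (v := 1) s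
  rw [mul_zero] at hmap
  erw [h, ← hmap, Measure.map_apply (measurable_const_mul s) measurableSet_Ici]
  rw [show (s * ·) ⁻¹' Set.Ici a = Set.Ici (a / s) from ?_]
  · rfl
  ext x
  simp only [Set.mem_preimage, Set.mem_Ici]
  rw [div_le_iff₀ hs, mul_comm]

lemma gaussianReal_Iio_neg (s : ℝ) (hs : 0 < s) (a : ℝ) :
    gaussianReal 0 ⟨s ^ 2, sq_nonneg s⟩ (Set.Iio (-a)) ≤ gaussQ (a / s) := by
  have hone : (⟨(-1 : ℝ) ^ 2, sq_nonneg _⟩ : ℝ≥0) * ⟨s ^ 2, sq_nonneg s⟩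
      = ⟨s ^ 2, sq_nonneg s⟩ := by ext; norm_num
  have hmap := gaussianReal_map_const_mul (μ := 0) (v := ⟨s ^ 2, sq_nonneg s⟩) (-1)
  erw [mul_zero, hone] at hmap
  calc gaussianReal 0 ⟨s ^ 2, sq_nonneg s⟩ (Set.Iio (-a))
      = (Measure.map (fun x => -1 * x) (gaussianReal 0 ⟨s ^ 2, sq_nonneg s⟩)) (Set.Iio (-a)) := by
        rw [hmap]
    _ = gaussianReal 0 ⟨s ^ 2, sq_nonneg s⟩ ((fun x : ℝ => -1 * x) ⁻¹' Set.Iio (-a)) :=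
        Measure.map_apply (measurable_const_mul _) measurableSet_Iio
    _ ≤ gaussianReal 0 ⟨s ^ 2, sq_nonneg s⟩ (Set.Ici a) := by
        refine measure_mono fun x hx => ?_
        simp only [Set.mem_preimage, Set.mem_Iio, neg_one_mul, neg_lt_neg_iff] at hx
        exact le_of_lt hx
    _ = gaussQ (a / s) := gaussianReal_Ici s hs a

lemma tail_bound {N : ℕ} (v : EuclideanSpace ℝ (Fin N)) (γ σ : ℝ) (hγ : 0 < γ) (hσ : 0 < σ)
    (hn : ‖v‖ = γ) (t : ℝ) :
    iidGaussian N σ {e | t ≤ ∑ i, v i * e i} = gaussQ (t / (σ * γ)) ∧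
    iidGaussian N σ {e | ∑ i, v i * e i < -t} ≤ gaussQ (t / (σ * γ)) := by
  have hm : Measurable (fun e : Fin N → ℝ => ∑ i, v i * e i) :=
    Finset.measurable_sum _ fun i _ => (measurable_pi_apply i).const_mul _
  have hsum : ∑ i, (v i) ^ 2 = γ ^ 2 := by
    rw [← hn, EuclideanSpace.norm_eq, Real.sq_sqrt (by positivity)]
    simp [Real.norm_eq_abs, sq_abs]
  have hvar : (⟨∑ i, (v i) ^ 2, Finset.sum_nonneg fun i _ => sq_nonneg _⟩ : ℝ≥0)
      * ⟨σ ^ 2, sq_nonneg σ⟩ = ⟨(σ * γ) ^ 2, sq_nonneg _⟩ := by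
    ext; push_cast [NNReal.coe_mk]; rw [hsum]; ring
  have hmapL := map_pi_gaussian ⟨σ ^ 2, sq_nonneg σ⟩ N (fun i => v i)
  erw [hvar] at hmapL
  have hσγ : 0 < σ * γ := mul_pos hσ hγ
  constructor
  · calc iidGaussian N σ {e | t ≤ ∑ i, v i * e i}
        = iidGaussian N σ ((fun e : Fin N → ℝ => ∑ i, v i * e i) ⁻¹' Set.Ici t) := rfl
      _ = (Measure.map (fun e : Fin N → ℝ => ∑ i, v i * e i) (iidGaussian N σ)) (Set.Ici t) :=
          (Measure.map_apply hm measurableSet_Ici).symm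
      _ = gaussianReal 0 ⟨(σ * γ) ^ 2, sq_nonneg _⟩ (Set.Ici t) := by rw [iidGaussian, hmapL]
      _ = gaussQ (t / (σ * γ)) := gaussianReal_Ici _ hσγ t
  · calc iidGaussian N σ {e | ∑ i, v i * e i < -t}
        = (Measure.map (fun e : Fin N → ℝ => ∑ i, v i * e i) (iidGaussian N σ)) (Set.Iio (-t)) :=
          (Measure.map_apply hm measurableSet_Iio).symm
      _ = gaussianReal 0 ⟨(σ * γ) ^ 2, sq_nonneg _⟩ (Set.Iio (-t)) := by rw [iidGaussian, hmapL]
      _ ≤ gaussQ (t / (σ * γ)) := gaussianReal_Iio_neg _ hσγ t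

theorem stmt_8 {N M : ℕ} (f : Fin M → EuclideanSpace ℝ (Fin N)) (γ μ : ℝ)
    (hγ : 0 < γ) (hμ : 0 ≤ μ) (hnorm : ∀ i, ‖f i‖ = γ)
    (hcoh : ∀ i j, i ≠ j → |⟪f i, f j⟫| ≤ μ * γ ^ 2)
    (𝒦 : Finset (Fin M)) (K : ℕ) (hK : 1 ≤ K) (hcard : 𝒦.card = K)
    (σ : ℝ) (hσ : 0 < σ)
    (τstar b : ℝ) (hτstar : τstar = (1 + μ) / (2 * (K : ℝ)))
    (hb : b = (γ / (2 * σ * (K : ℝ))) * (1 - (2 * (K : ℝ) - 1) * μ)) :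
    (∀ m ∉ 𝒦,
      iidGaussian N σ
        {e | τstar ≤ ⟪((K : ℝ)⁻¹ • ∑ k ∈ 𝒦, f k) + euc e, f m⟫ / γ ^ 2} ≤
        gaussQ b) ∧
    (∀ m ∈ 𝒦,
      iidGaussian N σ
        {e | ⟪((K : ℝ)⁻¹ • ∑ k ∈ 𝒦, f k) + euc e, f m⟫ / γ ^ 2 < τstar} ≤
        gaussQ b) := by
  have hKpos : (0:ℝ) < K := by exact_mod_cast hK
  have hγ2 : (0:ℝ) < γ ^ 2 := by positivity
  set t : ℝ := γ ^ 2 * (τstar - μ) with ht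
  have hQb : gaussQ (t / (σ * γ)) = gaussQ b := by
    congr 1
    rw [ht, hτstar, hb]
    field_simp
    ring
  constructor
  · intro m hm
    have hinner : ∀ e : Fin N → ℝ, ⟪euc e, f m⟫ = ∑ i, f m i * e i := by
      intro e
      simp [euc, PiLp.inner_apply, RCLike.inner_apply, conj_trivial, mul_comm]
    set c : ℝ := ⟪((K : ℝ)⁻¹ • ∑ k ∈ 𝒦, f k), f m⟫ with hc
    have hc_eq : c = (K : ℝ)⁻¹ * ∑ k ∈ 𝒦, ⟪f k, f m⟫ := by
      rw [hc, real_inner_smul_left, sum_inner]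
    have hS_le : ∑ k ∈ 𝒦, ⟪f k, f m⟫ ≤ (K : ℝ) * (μ * γ ^ 2) := by
      calc ∑ k ∈ 𝒦, ⟪f k, f m⟫ ≤ ∑ _k ∈ 𝒦, μ * γ ^ 2 :=
            Finset.sum_le_sum fun k hk =>
              le_trans (le_abs_self _) (hcoh k m (fun h => hm (h ▸ hk)))
        _ = (K : ℝ) * (μ * γ ^ 2) := by rw [Finset.sum_const, hcard, nsmul_eq_mul]
    have hc_le : c ≤ μ * γ ^ 2 := by
      rw [hc_eq]
      calc (K : ℝ)⁻¹ * ∑ k ∈ 𝒦, ⟪f k, f m⟫ ≤ (K : ℝ)⁻¹ * ((K : ℝ) * (μ * γ ^ 2)) := by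
            exact mul_le_mul_of_nonneg_left hS_le (by positivity)
        _ = μ * γ ^ 2 := by field_simp
    have hsub : {e : Fin N → ℝ | τstar ≤ ⟪((K : ℝ)⁻¹ • ∑ k ∈ 𝒦, f k) + euc e, f m⟫ / γ ^ 2}
        ⊆ {e | t ≤ ∑ i, f m i * e i} := by
      intro e he
      simp only [Set.mem_setOf_eq, inner_add_left, hinner e, ← hc] at he ⊢
      rw [le_div_iff₀ hγ2] at he
      have := hc_le
      nlinarith [he]
    calc iidGaussian N σ _ ≤ iidGaussian N σ {e | t ≤ ∑ i, f m i * e i} := measure_mono hsub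
      _ = gaussQ (t / (σ * γ)) := (tail_bound (f m) γ σ hγ hσ (hnorm m) t).1
      _ = gaussQ b := hQb
  · intro m hm
    have hinner : ∀ e : Fin N → ℝ, ⟪euc e, f m⟫ = ∑ i, f m i * e i := by
      intro e
      simp [euc, PiLp.inner_apply, RCLike.inner_apply, conj_trivial, mul_comm]
    set c : ℝ := ⟪((K : ℝ)⁻¹ • ∑ k ∈ 𝒦, f k), f m⟫ with hc
    have hc_eq : c = (K : ℝ)⁻¹ * ∑ k ∈ 𝒦, ⟪f k, f m⟫ := by
      rw [hc, real_inner_smul_left, sum_inner]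
    have hS_ge : γ ^ 2 - ((K : ℝ) - 1) * (μ * γ ^ 2) ≤ ∑ k ∈ 𝒦, ⟪f k, f m⟫ := by
      have hsplit : ∑ k ∈ 𝒦.erase m, ⟪f k, f m⟫ + ⟪f m, f m⟫ = ∑ k ∈ 𝒦, ⟪f k, f m⟫ :=
        Finset.sum_erase_add 𝒦 _ hm
      have hself : ⟪f m, f m⟫ = γ ^ 2 := by
        rw [real_inner_self_eq_norm_sq, hnorm m]
      have herase : -(((K : ℝ) - 1) * (μ * γ ^ 2)) ≤ ∑ k ∈ 𝒦.erase m, ⟪f k, f m⟫ := by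
        calc -(((K : ℝ) - 1) * (μ * γ ^ 2))
            = ∑ _k ∈ 𝒦.erase m, -(μ * γ ^ 2) := by
              rw [Finset.sum_const, Finset.card_erase_of_mem hm, hcard, nsmul_eq_mul]
              rw [Nat.cast_sub hK]
              push_cast
              ring
          _ ≤ ∑ k ∈ 𝒦.erase m, ⟪f k, f m⟫ :=
              Finset.sum_le_sum fun k hk => by
                have hne : k ≠ m := (Finset.mem_erase.mp hk).1
                have := hcoh k m hne
                have habs := neg_abs_le (⟪f k, f m⟫ : ℝ)
                linarith
      linarith
    have hc_ge : (K : ℝ)⁻¹ * (γ ^ 2 - ((K : ℝ) - 1) * (μ * γ ^ 2)) ≤ c := by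
      rw [hc_eq]
      exact mul_le_mul_of_nonneg_left hS_ge (by positivity)
    have hident : τstar * γ ^ 2 - (K : ℝ)⁻¹ * (γ ^ 2 - ((K : ℝ) - 1) * (μ * γ ^ 2)) = -t := by
      rw [ht, hτstar]
      field_simp
      ring
    have hsub : {e : Fin N → ℝ | ⟪((K : ℝ)⁻¹ • ∑ k ∈ 𝒦, f k) + euc e, f m⟫ / γ ^ 2 < τstar}
        ⊆ {e | ∑ i, f m i * e i < -t} := by
      intro e he
      simp only [Set.mem_setOf_eq, inner_add_left, hinner e, ← hc] at he ⊢
      rw [div_lt_iff₀ hγ2] at he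
      linarith
    calc iidGaussian N σ _ ≤ iidGaussian N σ {e | ∑ i, f m i * e i < -t} := measure_mono hsub
      _ ≤ gaussQ (t / (σ * γ)) := (tail_bound (f m) γ σ hγ hσ (hnorm m) t).2
      _ = gaussQ b := hQb
end

section
/- Let f_1,…,f_M ∈ ℝ^N be the columns of a matrix F, and let 𝒦, 𝒦' ⊆ {1,…,M} be nonempty subsets. Suppose F satisfies the (|𝒦∪𝒦'|, δ)-restricted isometry property. Then ‖(1/|𝒦|) Σ_{k∈𝒦} f_k − (1/|𝒦'|) Σ_{k∈𝒦'} f_k‖² ≥ ((1−δ)/(|𝒦||𝒦'|)) · (|𝒦| + |𝒦'| − 2|𝒦∩𝒦'|). -/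
open scoped RealInnerProductSpace

lemma sum_euc_apply {α : Type*} {n : ℕ} (s : Finset α) (g : α → (Fin n → ℝ)) (i : Fin n) :
    (∑ k ∈ s, euc (g k)) i = ∑ k ∈ s, g k i := by
  classical
  induction s using Finset.induction_on with
  | empty => simp [euc]
  | insert _ _ h ih => simp only [Finset.sum_insert h, PiLp.add_apply, ih]; simp [euc]

lemma norm_euc_sq {n : ℕ} (v : Fin n → ℝ) : ‖euc v‖ ^ 2 = ∑ i, v i * v i := by
  rw [EuclideanSpace.norm_sq_eq]
  simp [euc, sq]

theorem stmt_10 {N M : ℕ} (F : Matrix (Fin N) (Fin M) ℝ) (δ : ℝ)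
    (𝒦 𝒦' : Finset (Fin M)) (h𝒦 : 𝒦.Nonempty) (h𝒦' : 𝒦'.Nonempty)
    (hRIP : RIP (𝒦 ∪ 𝒦').card δ F) :
    ((1 - δ) / ((𝒦.card : ℝ) * (𝒦'.card : ℝ))) *
        ((𝒦.card : ℝ) + (𝒦'.card : ℝ) - 2 * ((𝒦 ∩ 𝒦').card : ℝ)) ≤
      ‖(𝒦.card : ℝ)⁻¹ • ∑ k ∈ 𝒦, euc (fun n => F n k) -
        (𝒦'.card : ℝ)⁻¹ • ∑ k ∈ 𝒦', euc (fun n => F n k)‖ ^ 2 := by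
  set a : ℝ := (𝒦.card : ℝ) with ha'
  set b : ℝ := (𝒦'.card : ℝ) with hb'
  set c : ℝ := ((𝒦 ∩ 𝒦').card : ℝ) with hc'
  have ha : 0 < a := by rw [ha']; exact_mod_cast Finset.card_pos.mpr h𝒦
  have hb : 0 < b := by rw [hb']; exact_mod_cast Finset.card_pos.mpr h𝒦'
  set x : Fin M → ℝ := fun i =>
    (if i ∈ 𝒦 then a⁻¹ else 0) - (if i ∈ 𝒦' then b⁻¹ else 0) with hx
  have hsp : Sparse (𝒦 ∪ 𝒦').card x := by
    apply Finset.card_le_card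
    intro i hi
    simp only [Finset.mem_filter, Finset.mem_univ, true_and, hx] at hi
    rw [Finset.mem_union]
    by_contra h
    push_neg at h
    simp [h.1, h.2] at hi
  obtain ⟨hlow, -⟩ := hRIP x hsp
  have hnx : ‖euc x‖ ^ 2 = (a + b - 2 * c) / (a * b) := by
    rw [norm_euc_sq]
    have : ∀ i : Fin M, x i * x i =
        (if i ∈ 𝒦 then a⁻¹ * a⁻¹ else 0) - 2 * (if i ∈ 𝒦 ∩ 𝒦' then a⁻¹ * b⁻¹ else 0)
          + (if i ∈ 𝒦' then b⁻¹ * b⁻¹ else 0) := by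
      intro i
      simp only [hx, Finset.mem_inter]
      by_cases h1 : i ∈ 𝒦 <;> by_cases h2 : i ∈ 𝒦' <;> simp [h1, h2] <;> ring
    simp only [this, Finset.sum_add_distrib, Finset.sum_sub_distrib,
      Finset.sum_ite_mem, Finset.univ_inter, Finset.sum_const, nsmul_eq_mul]
    rw [← Finset.mul_sum]
    simp only [Finset.sum_ite_mem, Finset.univ_inter, Finset.sum_const, nsmul_eq_mul]
    rw [← ha', ← hb', ← hc']
    field_simp
    ring
  have hFx : euc (F.mulVec x) = a⁻¹ • ∑ k ∈ 𝒦, euc (fun n => F n k) -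
      b⁻¹ • ∑ k ∈ 𝒦', euc (fun n => F n k) := by
    ext n
    simp only [euc, WithLp.equiv_symm_apply, PiLp.toLp_apply, PiLp.sub_apply, PiLp.smul_apply,
      Finset.sum_apply, smul_eq_mul, Matrix.mulVec, dotProduct, hx]
    simp only [mul_sub, mul_ite, mul_zero, Finset.sum_sub_distrib, Finset.sum_ite_mem,
      Finset.univ_inter, Finset.mul_sum]
    congr 1 <;>
      · rw [show ∀ (s : Finset (Fin M)), (∑ k ∈ s, WithLp.toLp 2 fun m => F m k) n = ∑ k ∈ s, F n k from fun s => sum_euc_apply s _ n, Finset.mul_sum]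
        exact Finset.sum_congr rfl fun j _ => mul_comm _ _
  rw [hFx, hnx] at hlow
  calc (1 - δ) / (a * b) * (a + b - 2 * c)
      = (1 - δ) * ((a + b - 2 * c) / (a * b)) := by ring
    _ ≤ _ := hlow
end
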